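/- arXiv:1611.04070 — 2 statements merged into one kernel-verified Lean document; each statement's English description precedes it below -/
import Mathlib

section
/- Let A₁⁴ = ℂf⊕ℂe₊⊕ℂe₋ with f = 2H_α + 2H_β, e₊ = √2·(X_{−β} + X_{3α+2β}), e₋ = √2·(X_β + X_{−(3α+2β)}). Then under the adjoint action G₂ = A₁⁴ ⊕ V₁ ⊕ V₂ ⊕ V₃ as A₁⁴-modules, where V₁ = ℂX_α⊕ℂX_{α+β}⊕ℂX_{−(2α+β)}, V₂ = ℂX_{−α}⊕ℂX_{−(α+β)}⊕ℂX_{2α+β} and V₃ = ℂX_{3α+β}⊕ℂX_{−(3α+β)}⊕ℂH_{α+β}⊕ℂ(X_β−X_{−(3α+2β)})⊕ℂ(X_{−β}−X_{3α+2β}) are A₁⁴-submodules, V₁ and V₂ are irreducible of dimension 3 (each isomorphic to D₁) and V₃ is irreducible of dimension 5 (isomorphic to D₂). -/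
namespace G2Formal

/-- The positive roots of `G₂`: the pair `(k, l)` encodes `k•α + l•β`,
where `α` is the short simple root and `β` is the long simple root. -/
def PhiP : Set (ℤ × ℤ) := {(1,0), (0,1), (1,1), (2,1), (3,1), (3,2)}

/-- All twelve roots of `G₂`. -/
def Phi : Set (ℤ × ℤ) :=
  {(1,0), (0,1), (1,1), (2,1), (3,1), (3,2),
   (-1,0), (0,-1), (-1,-1), (-2,-1), (-3,-1), (-3,-2)}

/-- The invariant inner product on the root space, normalized by `(α,α) = 1`,
`(β,β) = 3`, `(α,β) = -3/2`. -/
def ip (μ ν : ℤ × ℤ) : ℚ :=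
  (μ.1 * ν.1 : ℤ) - (3/2 : ℚ) * ((μ.1 * ν.2 + μ.2 * ν.1 : ℤ)) + 3 * ((μ.2 * ν.2 : ℤ) : ℚ)

/-- The Cartan pairing `⟨ν, μ^∨⟩ = 2(μ,ν)/(μ,μ)`. -/
def cart (μ ν : ℤ × ℤ) : ℚ := 2 * ip μ ν / ip μ μ

/-- Base table of structure constants `N_{μ,ν}` from the multiplication table of `G₂`. -/
def N0 (μ ν : ℤ × ℤ) : ℤ :=
  if μ = (0,1) ∧ ν = (1,0) then 1
  else if μ = (0,1) ∧ ν = (3,1) then 1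
  else if μ = (3,1) ∧ ν = (-3,-2) then 1
  else if μ = (2,1) ∧ ν = (-3,-1) then 1
  else if μ = (2,1) ∧ ν = (-3,-2) then 1
  else if μ = (-3,-2) ∧ ν = (1,1) then 1
  else if μ = (-3,-2) ∧ ν = (0,1) then 1
  else if μ = (-3,-1) ∧ ν = (1,0) then 1
  else if μ = (-1,-1) ∧ ν = (0,1) then 1
  else if μ = (1,1) ∧ ν = (1,0) then 2
  else if μ = (1,0) ∧ ν = (-2,-1) then 2
  else if μ = (-2,-1) ∧ ν = (1,1) then 2
  else if μ = (1,0) ∧ ν = (2,1) then 3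
  else if μ = (1,0) ∧ ν = (-1,-1) then 3
  else if μ = (1,1) ∧ ν = (2,1) then 3
  else 0

/-- The full table of structure constants, obtained from the base table via
`N_{μ,ν} = -N_{ν,μ} = -N_{-μ,-ν}`. -/
def Nc (μ ν : ℤ × ℤ) : ℤ := N0 μ ν - N0 ν μ - N0 (-μ) (-ν) + N0 (-ν) (-μ)

variable {L : Type*} [LieRing L] [LieAlgebra ℂ L]

/-- The coroot `H_μ` expressed in the basis `H_α`, `H_β` of the Cartan subalgebra. -/
noncomputable def Hr (Hα Hβ : L) (μ : ℤ × ℤ) : L :=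
  ((((μ.1 : ℚ) / ip μ μ : ℚ) : ℂ)) • Hα + ((((3 * μ.2 : ℚ) / ip μ μ : ℚ) : ℂ)) • Hβ

/-- The Chevalley basis of `G₂` as a family indexed by `Fin 14`. -/
def chev (Hα Hβ : L) (X : ℤ × ℤ → L) : Fin 14 → L :=
  ![Hα, Hβ, X (1,0), X (-1,0), X (0,1), X (0,-1), X (1,1), X (-1,-1),
    X (2,1), X (-2,-1), X (3,1), X (-3,-1), X (3,2), X (-3,-2)]

/-- `IsG2 Hα Hβ X` says that the complex Lie algebra `L`, together with the elements
`Hα`, `Hβ` and the root vectors `X γ` (for `γ` a root of `G₂`), realizes the multiplication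
table of the simple complex Lie algebra of type `G₂` in its Chevalley basis, and that the
fourteen Chevalley basis vectors form a basis of `L`.  Any such `L` is a copy of `G₂`. -/
structure IsG2 (Hα Hβ : L) (X : ℤ × ℤ → L) : Prop where
  indep : LinearIndependent ℂ (chev Hα Hβ X)
  span_top : Submodule.span ℂ (Set.range (chev Hα Hβ X)) = ⊤
  bracket_hh : ⁅Hα, Hβ⁆ = 0
  bracket_hx : ∀ μ ∈ Phi, ∀ ν ∈ Phi, ⁅Hr Hα Hβ μ, X ν⁆ = ((cart μ ν : ℚ) : ℂ) • X ν
  bracket_xnegx : ∀ μ ∈ Phi, ⁅X μ, X (-μ)⁆ = Hr Hα Hβ μ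
  bracket_xx : ∀ μ ∈ Phi, ∀ ν ∈ Phi, μ + ν ∈ Phi →
    ⁅X μ, X ν⁆ = ((Nc μ ν : ℤ) : ℂ) • X (μ + ν)
  bracket_xx_zero : ∀ μ ∈ Phi, ∀ ν ∈ Phi, μ + ν ≠ 0 → μ + ν ∉ Phi → ⁅X μ, X ν⁆ = 0

/-- Two Lie subalgebras of `L` are conjugate if some Lie algebra automorphism of `L`
maps one onto the other. -/
def SubalgConj (g k : LieSubalgebra ℂ L) : Prop :=
  ∃ s : L ≃ₗ⁅ℂ⁆ L, g.map s.toLieHom = k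

/-- A submodule is conjugate (as a subalgebra) to a given submodule if some Lie algebra
automorphism of `L` maps it onto the latter. -/
def ModConj (W W' : Submodule ℂ L) : Prop :=
  ∃ s : L ≃ₗ⁅ℂ⁆ L, W.map (s.toLinearEquiv : L →ₗ[ℂ] L) = W'

/-- A Lie subalgebra of `G₂` is *regular* if it is conjugate to a subalgebra of the form
`g(Σ, W) = W ⊕ ⊕_{γ ∈ Σ} ℂ X_γ` where `Σ ⊆ Φ` is closed and `W` is a subspace of the
Cartan subalgebra containing `[X_γ, X_{-γ}]` for every `γ ∈ Σ ∩ (-Σ)`. -/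
def IsRegularSubalgebra (Hα Hβ : L) (X : ℤ × ℤ → L) (g : LieSubalgebra ℂ L) : Prop :=
  ∃ (S : Set (ℤ × ℤ)) (W : Submodule ℂ L) (k : LieSubalgebra ℂ L),
    S ⊆ Phi ∧
    (∀ x ∈ S, ∀ y ∈ S, x + y ∈ Phi → x + y ∈ S) ∧
    W ≤ Submodule.span ℂ {Hα, Hβ} ∧
    (∀ γ ∈ S, -γ ∈ S → ⁅X γ, X (-γ)⁆ ∈ W) ∧
    k.toSubmodule = W ⊔ Submodule.span ℂ (X '' S) ∧
    SubalgConj g k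

/-- A Levi subalgebra of a Lie algebra `g`: a semisimple subalgebra which is a vector
space complement of the solvable radical. -/
def IsLeviOf (g : LieSubalgebra ℂ L) (m : LieSubalgebra ℂ ↥g) : Prop :=
  LieAlgebra.IsSemisimple ℂ ↥m ∧
  IsCompl m.toSubmodule (LieAlgebra.radical ℂ ↥g).toSubmodule


variable {L : Type*} [LieRing L] [LieAlgebra ℂ L]

/-- `V₁⁴ = ℂX_α ⊕ ℂX_{α+β} ⊕ ℂX_{-(2α+β)}`. -/
def V1four (X : ℤ × ℤ → L) : Submodule ℂ L :=
  Submodule.span ℂ {X (1,0), X (1,1), X (-2,-1)}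

/-- `V₂⁴ = ℂX_{-α} ⊕ ℂX_{-(α+β)} ⊕ ℂX_{2α+β}`. -/
def V2four (X : ℤ × ℤ → L) : Submodule ℂ L :=
  Submodule.span ℂ {X (-1,0), X (-1,-1), X (2,1)}

/-- `V₃⁴ = ℂX_{3α+β} ⊕ ℂX_{-(3α+β)} ⊕ ℂH_{α+β} ⊕ ℂ(X_β - X_{-(3α+2β)}) ⊕ ℂ(X_{-β} - X_{3α+2β})`,
where `H_{α+β} = H_α + 3H_β`. -/
def V3four (Hα Hβ : L) (X : ℤ × ℤ → L) : Submodule ℂ L :=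
  Submodule.span ℂ
    {X (3,1), X (-3,-1), Hα + (3:ℂ) • Hβ, X (0,1) - X (-3,-2), X (0,-1) - X (3,2)}


private lemma span_bracket {S T : Set L}
    (h : ∀ g ∈ S, ∀ t ∈ T, ⁅g, t⁆ ∈ Submodule.span ℂ T) :
    ∀ x ∈ Submodule.span ℂ S, ∀ v ∈ Submodule.span ℂ T, ⁅x, v⁆ ∈ Submodule.span ℂ T := by
  have h1 : ∀ g ∈ S, ∀ v ∈ Submodule.span ℂ T, ⁅g, v⁆ ∈ Submodule.span ℂ T := by
    intro g hg v hv
    induction hv using Submodule.span_induction with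
    | mem t ht => exact h g hg t ht
    | zero => simp
    | add a b _ _ ha hb => rw [lie_add]; exact add_mem ha hb
    | smul c a _ ha => rw [lie_smul]; exact Submodule.smul_mem _ _ ha
  intro x hx v hv
  induction hx using Submodule.span_induction with
  | mem g hg => exact h1 g hg v hv
  | zero => simp
  | add a b _ _ ha hb => rw [add_lie]; exact add_mem ha hb
  | smul c a _ ha => rw [smul_lie]; exact Submodule.smul_mem _ _ ha

private lemma smul_mem_cancel {U : Submodule ℂ L} {t : ℂ} {y : L}
    (ht : t ≠ 0) (h : t • y ∈ U) : y ∈ U := by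
  have h2 := U.smul_mem t⁻¹ h
  rwa [smul_smul, inv_mul_cancel₀ ht, one_smul] at h2

private lemma sum14 {M : Type*} [AddCommMonoid M] (v : Fin 14 → M) :
    ∑ i, v i = v 0 + v 1 + v 2 + v 3 + v 4 + v 5 + v 6 + v 7 + v 8 + v 9 + v 10 + v 11 +
      v 12 + v 13 := by
  rw [Fin.sum_univ_succ, Fin.sum_univ_succ, Fin.sum_univ_succ, Fin.sum_univ_succ,
    Fin.sum_univ_succ, Fin.sum_univ_succ, Fin.sum_univ_succ, Fin.sum_univ_succ,
    Fin.sum_univ_succ, Fin.sum_univ_succ, Fin.sum_univ_succ, Fin.sum_univ_succ,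
    Fin.sum_univ_succ, Fin.sum_univ_one]
  show v 0 + (v 1 + (v 2 + (v 3 + (v 4 + (v 5 + (v 6 + (v 7 + (v 8 + (v 9 + (v 10 +
    (v 11 + (v 12 + v 13)))))))))))) = _
  abel

set_option maxHeartbeats 4000000 in
/-- **Theorem.**  (Part of Proposition 2 of the paper.)  For
`A₁⁴ = ℂf ⊕ ℂe₊ ⊕ ℂe₋` with `f = 2H_α + 2H_β`, `e₊ = √2(X_{-β} + X_{3α+2β})`,
`e₋ = √2(X_β + X_{-(3α+2β)})`, one has `G₂ = A₁⁴ ⊕ V₁ ⊕ V₂ ⊕ V₃` as `A₁⁴`-modules under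
the adjoint action, where `V₁`, `V₂` are irreducible of dimension `3` (copies of `D₁`) and
`V₃` is irreducible of dimension `5` (a copy of `D₂`). -/
theorem adjoint_decomposition_for_A1four
    (Hα Hβ : L) (X : ℤ × ℤ → L) (hG2 : IsG2 Hα Hβ X)
    (f ep em : L)
    (hf : f = (2:ℂ) • Hα + (2:ℂ) • Hβ)
    (hep : ep = (Real.sqrt 2 : ℂ) • (X (0,-1) + X (3,2)))
    (hem : em = (Real.sqrt 2 : ℂ) • (X (0,1) + X (-3,-2))) :
    (∀ x ∈ Submodule.span ℂ ({f, ep, em} : Set L), ∀ v ∈ V1four X, ⁅x, v⁆ ∈ V1four X) ∧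
    (∀ x ∈ Submodule.span ℂ ({f, ep, em} : Set L), ∀ v ∈ V2four X, ⁅x, v⁆ ∈ V2four X) ∧
    (∀ x ∈ Submodule.span ℂ ({f, ep, em} : Set L), ∀ v ∈ V3four Hα Hβ X,
      ⁅x, v⁆ ∈ V3four Hα Hβ X) ∧
    Module.finrank ℂ ↥(V1four X (L := L)) = 3 ∧
    Module.finrank ℂ ↥(V2four X (L := L)) = 3 ∧
    Module.finrank ℂ ↥(V3four Hα Hβ X) = 5 ∧
    (∀ U : Submodule ℂ L, U ≤ V1four X →
      (∀ x ∈ Submodule.span ℂ ({f, ep, em} : Set L), ∀ u ∈ U, ⁅x, u⁆ ∈ U) →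
      U = ⊥ ∨ U = V1four X) ∧
    (∀ U : Submodule ℂ L, U ≤ V2four X →
      (∀ x ∈ Submodule.span ℂ ({f, ep, em} : Set L), ∀ u ∈ U, ⁅x, u⁆ ∈ U) →
      U = ⊥ ∨ U = V2four X) ∧
    (∀ U : Submodule ℂ L, U ≤ V3four Hα Hβ X →
      (∀ x ∈ Submodule.span ℂ ({f, ep, em} : Set L), ∀ u ∈ U, ⁅x, u⁆ ∈ U) →
      U = ⊥ ∨ U = V3four Hα Hβ X) ∧
    Submodule.span ℂ ({f, ep, em} : Set L) ⊔ V1four X ⊔ V2four X ⊔ V3four Hα Hβ X = ⊤ ∧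
    Submodule.span ℂ ({f, ep, em} : Set L) ⊓ (V1four X ⊔ V2four X ⊔ V3four Hα Hβ X) = ⊥ ∧
    V1four X ⊓ (Submodule.span ℂ ({f, ep, em} : Set L) ⊔ V2four X ⊔ V3four Hα Hβ X) = ⊥ ∧
    V2four X ⊓ (Submodule.span ℂ ({f, ep, em} : Set L) ⊔ V1four X ⊔ V3four Hα Hβ X) = ⊥ ∧
    V3four Hα Hβ X ⊓ (Submodule.span ℂ ({f, ep, em} : Set L) ⊔ V1four X ⊔ V2four X) = ⊥ := by


  classical
  have hs : (Real.sqrt 2 : ℂ) ≠ 0 :=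
    Complex.ofReal_ne_zero.mpr (Real.sqrt_ne_zero'.mpr (by norm_num))
  have hHra : Hr Hα Hβ (1,0) = Hα := by simp [Hr, ip]
  have hHrb : Hr Hα Hβ (0,1) = Hβ := by simp [Hr, ip]
  have mem_p1p0 : (1,0) ∈ Phi := (Set.mem_insert _ _)
  have mem_p0p1 : (0,1) ∈ Phi := (Set.mem_insert_of_mem _ (Set.mem_insert _ _))
  have mem_p1p1 : (1,1) ∈ Phi := (Set.mem_insert_of_mem _ (Set.mem_insert_of_mem _ (Set.mem_insert _ _)))
  have mem_p2p1 : (2,1) ∈ Phi := (Set.mem_insert_of_mem _ (Set.mem_insert_of_mem _ (Set.mem_insert_of_mem _ (Set.mem_insert _ _))))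
  have mem_p3p1 : (3,1) ∈ Phi := (Set.mem_insert_of_mem _ (Set.mem_insert_of_mem _ (Set.mem_insert_of_mem _ (Set.mem_insert_of_mem _ (Set.mem_insert _ _)))))
  have mem_p3p2 : (3,2) ∈ Phi := (Set.mem_insert_of_mem _ (Set.mem_insert_of_mem _ (Set.mem_insert_of_mem _ (Set.mem_insert_of_mem _ (Set.mem_insert_of_mem _ (Set.mem_insert _ _))))))
  have mem_m1p0 : (-1,0) ∈ Phi := (Set.mem_insert_of_mem _ (Set.mem_insert_of_mem _ (Set.mem_insert_of_mem _ (Set.mem_insert_of_mem _ (Set.mem_insert_of_mem _ (Set.mem_insert_of_mem _ (Set.mem_insert _ _)))))))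
  have mem_p0m1 : (0,-1) ∈ Phi := (Set.mem_insert_of_mem _ (Set.mem_insert_of_mem _ (Set.mem_insert_of_mem _ (Set.mem_insert_of_mem _ (Set.mem_insert_of_mem _ (Set.mem_insert_of_mem _ (Set.mem_insert_of_mem _ (Set.mem_insert _ _))))))))
  have mem_m1m1 : (-1,-1) ∈ Phi := (Set.mem_insert_of_mem _ (Set.mem_insert_of_mem _ (Set.mem_insert_of_mem _ (Set.mem_insert_of_mem _ (Set.mem_insert_of_mem _ (Set.mem_insert_of_mem _ (Set.mem_insert_of_mem _ (Set.mem_insert_of_mem _ (Set.mem_insert _ _)))))))))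
  have mem_m2m1 : (-2,-1) ∈ Phi := (Set.mem_insert_of_mem _ (Set.mem_insert_of_mem _ (Set.mem_insert_of_mem _ (Set.mem_insert_of_mem _ (Set.mem_insert_of_mem _ (Set.mem_insert_of_mem _ (Set.mem_insert_of_mem _ (Set.mem_insert_of_mem _ (Set.mem_insert_of_mem _ (Set.mem_insert _ _))))))))))
  have mem_m3m1 : (-3,-1) ∈ Phi := (Set.mem_insert_of_mem _ (Set.mem_insert_of_mem _ (Set.mem_insert_of_mem _ (Set.mem_insert_of_mem _ (Set.mem_insert_of_mem _ (Set.mem_insert_of_mem _ (Set.mem_insert_of_mem _ (Set.mem_insert_of_mem _ (Set.mem_insert_of_mem _ (Set.mem_insert_of_mem _ (Set.mem_insert _ _)))))))))))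
  have mem_m3m2 : (-3,-2) ∈ Phi := (Set.mem_insert_of_mem _ (Set.mem_insert_of_mem _ (Set.mem_insert_of_mem _ (Set.mem_insert_of_mem _ (Set.mem_insert_of_mem _ (Set.mem_insert_of_mem _ (Set.mem_insert_of_mem _ (Set.mem_insert_of_mem _ (Set.mem_insert_of_mem _ (Set.mem_insert_of_mem _ (Set.mem_insert_of_mem _ rfl)))))))))))
  have ha_p1p0 : ⁅Hα, X (1,0)⁆ = (2:ℂ) • X (1,0) := by
    have h := hG2.bracket_hx (1,0) mem_p1p0 (1,0) mem_p1p0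
    rw [hHra] at h; rw [h]; norm_num [cart, ip]
  have hb_p1p0 : ⁅Hβ, X (1,0)⁆ = (-1:ℂ) • X (1,0) := by
    have h := hG2.bracket_hx (0,1) mem_p0p1 (1,0) mem_p1p0
    rw [hHrb] at h; rw [h]; norm_num [cart, ip]
  have ha_p0p1 : ⁅Hα, X (0,1)⁆ = (-3:ℂ) • X (0,1) := by
    have h := hG2.bracket_hx (1,0) mem_p1p0 (0,1) mem_p0p1
    rw [hHra] at h; rw [h]; norm_num [cart, ip]
  have hb_p0p1 : ⁅Hβ, X (0,1)⁆ = (2:ℂ) • X (0,1) := by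
    have h := hG2.bracket_hx (0,1) mem_p0p1 (0,1) mem_p0p1
    rw [hHrb] at h; rw [h]; norm_num [cart, ip]
  have ha_p1p1 : ⁅Hα, X (1,1)⁆ = (-1:ℂ) • X (1,1) := by
    have h := hG2.bracket_hx (1,0) mem_p1p0 (1,1) mem_p1p1
    rw [hHra] at h; rw [h]; norm_num [cart, ip]
  have hb_p1p1 : ⁅Hβ, X (1,1)⁆ = (1:ℂ) • X (1,1) := by
    have h := hG2.bracket_hx (0,1) mem_p0p1 (1,1) mem_p1p1
    rw [hHrb] at h; rw [h]; norm_num [cart, ip]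
  have ha_p2p1 : ⁅Hα, X (2,1)⁆ = (1:ℂ) • X (2,1) := by
    have h := hG2.bracket_hx (1,0) mem_p1p0 (2,1) mem_p2p1
    rw [hHra] at h; rw [h]; norm_num [cart, ip]
  have hb_p2p1 : ⁅Hβ, X (2,1)⁆ = (0:ℂ) • X (2,1) := by
    have h := hG2.bracket_hx (0,1) mem_p0p1 (2,1) mem_p2p1
    rw [hHrb] at h; rw [h]; norm_num [cart, ip]
  have ha_p3p1 : ⁅Hα, X (3,1)⁆ = (3:ℂ) • X (3,1) := by
    have h := hG2.bracket_hx (1,0) mem_p1p0 (3,1) mem_p3p1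
    rw [hHra] at h; rw [h]; norm_num [cart, ip]
  have hb_p3p1 : ⁅Hβ, X (3,1)⁆ = (-1:ℂ) • X (3,1) := by
    have h := hG2.bracket_hx (0,1) mem_p0p1 (3,1) mem_p3p1
    rw [hHrb] at h; rw [h]; norm_num [cart, ip]
  have ha_p3p2 : ⁅Hα, X (3,2)⁆ = (0:ℂ) • X (3,2) := by
    have h := hG2.bracket_hx (1,0) mem_p1p0 (3,2) mem_p3p2
    rw [hHra] at h; rw [h]; norm_num [cart, ip]
  have hb_p3p2 : ⁅Hβ, X (3,2)⁆ = (1:ℂ) • X (3,2) := by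
    have h := hG2.bracket_hx (0,1) mem_p0p1 (3,2) mem_p3p2
    rw [hHrb] at h; rw [h]; norm_num [cart, ip]
  have ha_m1p0 : ⁅Hα, X (-1,0)⁆ = (-2:ℂ) • X (-1,0) := by
    have h := hG2.bracket_hx (1,0) mem_p1p0 (-1,0) mem_m1p0
    rw [hHra] at h; rw [h]; norm_num [cart, ip]
  have hb_m1p0 : ⁅Hβ, X (-1,0)⁆ = (1:ℂ) • X (-1,0) := by
    have h := hG2.bracket_hx (0,1) mem_p0p1 (-1,0) mem_m1p0
    rw [hHrb] at h; rw [h]; norm_num [cart, ip]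
  have ha_p0m1 : ⁅Hα, X (0,-1)⁆ = (3:ℂ) • X (0,-1) := by
    have h := hG2.bracket_hx (1,0) mem_p1p0 (0,-1) mem_p0m1
    rw [hHra] at h; rw [h]; norm_num [cart, ip]
  have hb_p0m1 : ⁅Hβ, X (0,-1)⁆ = (-2:ℂ) • X (0,-1) := by
    have h := hG2.bracket_hx (0,1) mem_p0p1 (0,-1) mem_p0m1
    rw [hHrb] at h; rw [h]; norm_num [cart, ip]
  have ha_m1m1 : ⁅Hα, X (-1,-1)⁆ = (1:ℂ) • X (-1,-1) := by
    have h := hG2.bracket_hx (1,0) mem_p1p0 (-1,-1) mem_m1m1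
    rw [hHra] at h; rw [h]; norm_num [cart, ip]
  have hb_m1m1 : ⁅Hβ, X (-1,-1)⁆ = (-1:ℂ) • X (-1,-1) := by
    have h := hG2.bracket_hx (0,1) mem_p0p1 (-1,-1) mem_m1m1
    rw [hHrb] at h; rw [h]; norm_num [cart, ip]
  have ha_m2m1 : ⁅Hα, X (-2,-1)⁆ = (-1:ℂ) • X (-2,-1) := by
    have h := hG2.bracket_hx (1,0) mem_p1p0 (-2,-1) mem_m2m1
    rw [hHra] at h; rw [h]; norm_num [cart, ip]
  have hb_m2m1 : ⁅Hβ, X (-2,-1)⁆ = (0:ℂ) • X (-2,-1) := by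
    have h := hG2.bracket_hx (0,1) mem_p0p1 (-2,-1) mem_m2m1
    rw [hHrb] at h; rw [h]; norm_num [cart, ip]
  have ha_m3m1 : ⁅Hα, X (-3,-1)⁆ = (-3:ℂ) • X (-3,-1) := by
    have h := hG2.bracket_hx (1,0) mem_p1p0 (-3,-1) mem_m3m1
    rw [hHra] at h; rw [h]; norm_num [cart, ip]
  have hb_m3m1 : ⁅Hβ, X (-3,-1)⁆ = (1:ℂ) • X (-3,-1) := by
    have h := hG2.bracket_hx (0,1) mem_p0p1 (-3,-1) mem_m3m1
    rw [hHrb] at h; rw [h]; norm_num [cart, ip]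
  have ha_m3m2 : ⁅Hα, X (-3,-2)⁆ = (0:ℂ) • X (-3,-2) := by
    have h := hG2.bracket_hx (1,0) mem_p1p0 (-3,-2) mem_m3m2
    rw [hHra] at h; rw [h]; norm_num [cart, ip]
  have hb_m3m2 : ⁅Hβ, X (-3,-2)⁆ = (-1:ℂ) • X (-3,-2) := by
    have h := hG2.bracket_hx (0,1) mem_p0p1 (-3,-2) mem_m3m2
    rw [hHrb] at h; rw [h]; norm_num [cart, ip]
  have e_p0m1_p1p0 : ⁅X (0,-1), X (1,0)⁆ = 0 :=
    hG2.bracket_xx_zero (0,-1) mem_p0m1 (1,0) mem_p1p0 (by decide) (by simp [Phi, Prod.ext_iff])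
  have e_p0m1_p0p1 : ⁅X (0,-1), X (0,1)⁆ = (0:ℂ) • Hα + (-1:ℂ) • Hβ := by
    have h := hG2.bracket_xnegx (0,-1) mem_p0m1
    rw [show (-(0,-1) : ℤ × ℤ) = (0,1) from rfl] at h
    rw [h, Hr]; norm_num [ip]
  have e_p0m1_p1p1 : ⁅X (0,-1), X (1,1)⁆ = (1:ℂ) • X (1,0) := by
    have h := hG2.bracket_xx (0,-1) mem_p0m1 (1,1) mem_p1p1 (show _ ∈ Phi from mem_p1p0)
    rw [h, show Nc (0,-1) (1,1) = 1 from by decide,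
      show ((0,-1) + (1,1) : ℤ × ℤ) = (1,0) from by decide]; norm_num
  have e_p0m1_p2p1 : ⁅X (0,-1), X (2,1)⁆ = 0 :=
    hG2.bracket_xx_zero (0,-1) mem_p0m1 (2,1) mem_p2p1 (by decide) (by simp [Phi, Prod.ext_iff])
  have e_p0m1_p3p1 : ⁅X (0,-1), X (3,1)⁆ = 0 :=
    hG2.bracket_xx_zero (0,-1) mem_p0m1 (3,1) mem_p3p1 (by decide) (by simp [Phi, Prod.ext_iff])
  have e_p0m1_p3p2 : ⁅X (0,-1), X (3,2)⁆ = (1:ℂ) • X (3,1) := by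
    have h := hG2.bracket_xx (0,-1) mem_p0m1 (3,2) mem_p3p2 (show _ ∈ Phi from mem_p3p1)
    rw [h, show Nc (0,-1) (3,2) = 1 from by decide,
      show ((0,-1) + (3,2) : ℤ × ℤ) = (3,1) from by decide]; norm_num
  have e_p0m1_m1p0 : ⁅X (0,-1), X (-1,0)⁆ = (-1:ℂ) • X (-1,-1) := by
    have h := hG2.bracket_xx (0,-1) mem_p0m1 (-1,0) mem_m1p0 (show _ ∈ Phi from mem_m1m1)
    rw [h, show Nc (0,-1) (-1,0) = -1 from by decide,
      show ((0,-1) + (-1,0) : ℤ × ℤ) = (-1,-1) from by decide]; norm_num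
  have e_p0m1_m1m1 : ⁅X (0,-1), X (-1,-1)⁆ = 0 :=
    hG2.bracket_xx_zero (0,-1) mem_p0m1 (-1,-1) mem_m1m1 (by decide) (by simp [Phi, Prod.ext_iff])
  have e_p0m1_m2m1 : ⁅X (0,-1), X (-2,-1)⁆ = 0 :=
    hG2.bracket_xx_zero (0,-1) mem_p0m1 (-2,-1) mem_m2m1 (by decide) (by simp [Phi, Prod.ext_iff])
  have e_p0m1_m3m1 : ⁅X (0,-1), X (-3,-1)⁆ = (-1:ℂ) • X (-3,-2) := by
    have h := hG2.bracket_xx (0,-1) mem_p0m1 (-3,-1) mem_m3m1 (show _ ∈ Phi from mem_m3m2)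
    rw [h, show Nc (0,-1) (-3,-1) = -1 from by decide,
      show ((0,-1) + (-3,-1) : ℤ × ℤ) = (-3,-2) from by decide]; norm_num
  have e_p0m1_m3m2 : ⁅X (0,-1), X (-3,-2)⁆ = 0 :=
    hG2.bracket_xx_zero (0,-1) mem_p0m1 (-3,-2) mem_m3m2 (by decide) (by simp [Phi, Prod.ext_iff])
  have e_p3p2_p1p0 : ⁅X (3,2), X (1,0)⁆ = 0 :=
    hG2.bracket_xx_zero (3,2) mem_p3p2 (1,0) mem_p1p0 (by decide) (by simp [Phi, Prod.ext_iff])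
  have e_p3p2_p0p1 : ⁅X (3,2), X (0,1)⁆ = 0 :=
    hG2.bracket_xx_zero (3,2) mem_p3p2 (0,1) mem_p0p1 (by decide) (by simp [Phi, Prod.ext_iff])
  have e_p3p2_p1p1 : ⁅X (3,2), X (1,1)⁆ = 0 :=
    hG2.bracket_xx_zero (3,2) mem_p3p2 (1,1) mem_p1p1 (by decide) (by simp [Phi, Prod.ext_iff])
  have e_p3p2_p2p1 : ⁅X (3,2), X (2,1)⁆ = 0 :=
    hG2.bracket_xx_zero (3,2) mem_p3p2 (2,1) mem_p2p1 (by decide) (by simp [Phi, Prod.ext_iff])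
  have e_p3p2_p3p1 : ⁅X (3,2), X (3,1)⁆ = 0 :=
    hG2.bracket_xx_zero (3,2) mem_p3p2 (3,1) mem_p3p1 (by decide) (by simp [Phi, Prod.ext_iff])
  have e_p3p2_m1p0 : ⁅X (3,2), X (-1,0)⁆ = 0 :=
    hG2.bracket_xx_zero (3,2) mem_p3p2 (-1,0) mem_m1p0 (by decide) (by simp [Phi, Prod.ext_iff])
  have e_p3p2_p0m1 : ⁅X (3,2), X (0,-1)⁆ = (-1:ℂ) • X (3,1) := by
    have h := hG2.bracket_xx (3,2) mem_p3p2 (0,-1) mem_p0m1 (show _ ∈ Phi from mem_p3p1)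
    rw [h, show Nc (3,2) (0,-1) = -1 from by decide,
      show ((3,2) + (0,-1) : ℤ × ℤ) = (3,1) from by decide]; norm_num
  have e_p3p2_m1m1 : ⁅X (3,2), X (-1,-1)⁆ = (-1:ℂ) • X (2,1) := by
    have h := hG2.bracket_xx (3,2) mem_p3p2 (-1,-1) mem_m1m1 (show _ ∈ Phi from mem_p2p1)
    rw [h, show Nc (3,2) (-1,-1) = -1 from by decide,
      show ((3,2) + (-1,-1) : ℤ × ℤ) = (2,1) from by decide]; norm_num
  have e_p3p2_m2m1 : ⁅X (3,2), X (-2,-1)⁆ = (1:ℂ) • X (1,1) := by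
    have h := hG2.bracket_xx (3,2) mem_p3p2 (-2,-1) mem_m2m1 (show _ ∈ Phi from mem_p1p1)
    rw [h, show Nc (3,2) (-2,-1) = 1 from by decide,
      show ((3,2) + (-2,-1) : ℤ × ℤ) = (1,1) from by decide]; norm_num
  have e_p3p2_m3m1 : ⁅X (3,2), X (-3,-1)⁆ = (1:ℂ) • X (0,1) := by
    have h := hG2.bracket_xx (3,2) mem_p3p2 (-3,-1) mem_m3m1 (show _ ∈ Phi from mem_p0p1)
    rw [h, show Nc (3,2) (-3,-1) = 1 from by decide,
      show ((3,2) + (-3,-1) : ℤ × ℤ) = (0,1) from by decide]; norm_num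
  have e_p3p2_m3m2 : ⁅X (3,2), X (-3,-2)⁆ = (1:ℂ) • Hα + (2:ℂ) • Hβ := by
    have h := hG2.bracket_xnegx (3,2) mem_p3p2
    rw [show (-(3,2) : ℤ × ℤ) = (-3,-2) from rfl] at h
    rw [h, Hr]; norm_num [ip]
  have e_p0p1_p1p0 : ⁅X (0,1), X (1,0)⁆ = (1:ℂ) • X (1,1) := by
    have h := hG2.bracket_xx (0,1) mem_p0p1 (1,0) mem_p1p0 (show _ ∈ Phi from mem_p1p1)
    rw [h, show Nc (0,1) (1,0) = 1 from by decide,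
      show ((0,1) + (1,0) : ℤ × ℤ) = (1,1) from by decide]; norm_num
  have e_p0p1_p1p1 : ⁅X (0,1), X (1,1)⁆ = 0 :=
    hG2.bracket_xx_zero (0,1) mem_p0p1 (1,1) mem_p1p1 (by decide) (by simp [Phi, Prod.ext_iff])
  have e_p0p1_p2p1 : ⁅X (0,1), X (2,1)⁆ = 0 :=
    hG2.bracket_xx_zero (0,1) mem_p0p1 (2,1) mem_p2p1 (by decide) (by simp [Phi, Prod.ext_iff])
  have e_p0p1_p3p1 : ⁅X (0,1), X (3,1)⁆ = (1:ℂ) • X (3,2) := by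
    have h := hG2.bracket_xx (0,1) mem_p0p1 (3,1) mem_p3p1 (show _ ∈ Phi from mem_p3p2)
    rw [h, show Nc (0,1) (3,1) = 1 from by decide,
      show ((0,1) + (3,1) : ℤ × ℤ) = (3,2) from by decide]; norm_num
  have e_p0p1_p3p2 : ⁅X (0,1), X (3,2)⁆ = 0 :=
    hG2.bracket_xx_zero (0,1) mem_p0p1 (3,2) mem_p3p2 (by decide) (by simp [Phi, Prod.ext_iff])
  have e_p0p1_m1p0 : ⁅X (0,1), X (-1,0)⁆ = 0 :=
    hG2.bracket_xx_zero (0,1) mem_p0p1 (-1,0) mem_m1p0 (by decide) (by simp [Phi, Prod.ext_iff])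
  have e_p0p1_p0m1 : ⁅X (0,1), X (0,-1)⁆ = (0:ℂ) • Hα + (1:ℂ) • Hβ := by
    have h := hG2.bracket_xnegx (0,1) mem_p0p1
    rw [show (-(0,1) : ℤ × ℤ) = (0,-1) from rfl] at h
    rw [h, Hr]; norm_num [ip]
  have e_p0p1_m1m1 : ⁅X (0,1), X (-1,-1)⁆ = (-1:ℂ) • X (-1,0) := by
    have h := hG2.bracket_xx (0,1) mem_p0p1 (-1,-1) mem_m1m1 (show _ ∈ Phi from mem_m1p0)
    rw [h, show Nc (0,1) (-1,-1) = -1 from by decide,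
      show ((0,1) + (-1,-1) : ℤ × ℤ) = (-1,0) from by decide]; norm_num
  have e_p0p1_m2m1 : ⁅X (0,1), X (-2,-1)⁆ = 0 :=
    hG2.bracket_xx_zero (0,1) mem_p0p1 (-2,-1) mem_m2m1 (by decide) (by simp [Phi, Prod.ext_iff])
  have e_p0p1_m3m1 : ⁅X (0,1), X (-3,-1)⁆ = 0 :=
    hG2.bracket_xx_zero (0,1) mem_p0p1 (-3,-1) mem_m3m1 (by decide) (by simp [Phi, Prod.ext_iff])
  have e_p0p1_m3m2 : ⁅X (0,1), X (-3,-2)⁆ = (-1:ℂ) • X (-3,-1) := by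
    have h := hG2.bracket_xx (0,1) mem_p0p1 (-3,-2) mem_m3m2 (show _ ∈ Phi from mem_m3m1)
    rw [h, show Nc (0,1) (-3,-2) = -1 from by decide,
      show ((0,1) + (-3,-2) : ℤ × ℤ) = (-3,-1) from by decide]; norm_num
  have e_m3m2_p1p0 : ⁅X (-3,-2), X (1,0)⁆ = 0 :=
    hG2.bracket_xx_zero (-3,-2) mem_m3m2 (1,0) mem_p1p0 (by decide) (by simp [Phi, Prod.ext_iff])
  have e_m3m2_p0p1 : ⁅X (-3,-2), X (0,1)⁆ = (1:ℂ) • X (-3,-1) := by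
    have h := hG2.bracket_xx (-3,-2) mem_m3m2 (0,1) mem_p0p1 (show _ ∈ Phi from mem_m3m1)
    rw [h, show Nc (-3,-2) (0,1) = 1 from by decide,
      show ((-3,-2) + (0,1) : ℤ × ℤ) = (-3,-1) from by decide]; norm_num
  have e_m3m2_p1p1 : ⁅X (-3,-2), X (1,1)⁆ = (1:ℂ) • X (-2,-1) := by
    have h := hG2.bracket_xx (-3,-2) mem_m3m2 (1,1) mem_p1p1 (show _ ∈ Phi from mem_m2m1)
    rw [h, show Nc (-3,-2) (1,1) = 1 from by decide,
      show ((-3,-2) + (1,1) : ℤ × ℤ) = (-2,-1) from by decide]; norm_num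
  have e_m3m2_p2p1 : ⁅X (-3,-2), X (2,1)⁆ = (-1:ℂ) • X (-1,-1) := by
    have h := hG2.bracket_xx (-3,-2) mem_m3m2 (2,1) mem_p2p1 (show _ ∈ Phi from mem_m1m1)
    rw [h, show Nc (-3,-2) (2,1) = -1 from by decide,
      show ((-3,-2) + (2,1) : ℤ × ℤ) = (-1,-1) from by decide]; norm_num
  have e_m3m2_p3p1 : ⁅X (-3,-2), X (3,1)⁆ = (-1:ℂ) • X (0,-1) := by
    have h := hG2.bracket_xx (-3,-2) mem_m3m2 (3,1) mem_p3p1 (show _ ∈ Phi from mem_p0m1)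
    rw [h, show Nc (-3,-2) (3,1) = -1 from by decide,
      show ((-3,-2) + (3,1) : ℤ × ℤ) = (0,-1) from by decide]; norm_num
  have e_m3m2_p3p2 : ⁅X (-3,-2), X (3,2)⁆ = (-1:ℂ) • Hα + (-2:ℂ) • Hβ := by
    have h := hG2.bracket_xnegx (-3,-2) mem_m3m2
    rw [show (-(-3,-2) : ℤ × ℤ) = (3,2) from rfl] at h
    rw [h, Hr]; norm_num [ip]
  have e_m3m2_m1p0 : ⁅X (-3,-2), X (-1,0)⁆ = 0 :=
    hG2.bracket_xx_zero (-3,-2) mem_m3m2 (-1,0) mem_m1p0 (by decide) (by simp [Phi, Prod.ext_iff])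
  have e_m3m2_p0m1 : ⁅X (-3,-2), X (0,-1)⁆ = 0 :=
    hG2.bracket_xx_zero (-3,-2) mem_m3m2 (0,-1) mem_p0m1 (by decide) (by simp [Phi, Prod.ext_iff])
  have e_m3m2_m1m1 : ⁅X (-3,-2), X (-1,-1)⁆ = 0 :=
    hG2.bracket_xx_zero (-3,-2) mem_m3m2 (-1,-1) mem_m1m1 (by decide) (by simp [Phi, Prod.ext_iff])
  have e_m3m2_m2m1 : ⁅X (-3,-2), X (-2,-1)⁆ = 0 :=
    hG2.bracket_xx_zero (-3,-2) mem_m3m2 (-2,-1) mem_m2m1 (by decide) (by simp [Phi, Prod.ext_iff])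
  have e_m3m2_m3m1 : ⁅X (-3,-2), X (-3,-1)⁆ = 0 :=
    hG2.bracket_xx_zero (-3,-2) mem_m3m2 (-3,-1) mem_m3m1 (by decide) (by simp [Phi, Prod.ext_iff])
  have hba : ⁅Hβ, Hα⁆ = 0 := by rw [← lie_skew, hG2.bracket_hh, neg_zero]
  have cf_v1 : ⁅f, X (1,0)⁆ = (2:ℂ) • X (1,0) := by
    rw [hf]; simp only [add_lie, smul_lie, ha_p1p0, hb_p1p0]; module
  have cf_v0 : ⁅f, X (1,1)⁆ = 0 := by
    rw [hf]; simp only [add_lie, smul_lie, ha_p1p1, hb_p1p1]; module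
  have cf_vm : ⁅f, X (-2,-1)⁆ = (-2:ℂ) • X (-2,-1) := by
    rw [hf]; simp only [add_lie, smul_lie, ha_m2m1, hb_m2m1]; module
  have cf_w1 : ⁅f, X (2,1)⁆ = (2:ℂ) • X (2,1) := by
    rw [hf]; simp only [add_lie, smul_lie, ha_p2p1, hb_p2p1]; module
  have cf_w0 : ⁅f, X (-1,-1)⁆ = 0 := by
    rw [hf]; simp only [add_lie, smul_lie, ha_m1m1, hb_m1m1]; module
  have cf_wm : ⁅f, X (-1,0)⁆ = (-2:ℂ) • X (-1,0) := by
    rw [hf]; simp only [add_lie, smul_lie, ha_m1p0, hb_m1p0]; module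
  have cf_u2 : ⁅f, X (3,1)⁆ = (4:ℂ) • X (3,1) := by
    rw [hf]; simp only [add_lie, smul_lie, ha_p3p1, hb_p3p1]; module
  have cf_um2 : ⁅f, X (-3,-1)⁆ = (-4:ℂ) • X (-3,-1) := by
    rw [hf]; simp only [add_lie, smul_lie, ha_m3m1, hb_m3m1]; module
  have cf_u1 : ⁅f, (X (0,-1) - X (3,2))⁆ = (2:ℂ) • (X (0,-1) - X (3,2)) := by
    rw [hf]; simp only [lie_sub, add_lie, smul_lie, ha_p0m1, hb_p0m1, ha_p3p2, hb_p3p2]; module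
  have cf_um1 : ⁅f, (X (0,1) - X (-3,-2))⁆ = (-2:ℂ) • (X (0,1) - X (-3,-2)) := by
    rw [hf]; simp only [lie_sub, add_lie, smul_lie, ha_p0p1, hb_p0p1, ha_m3m2, hb_m3m2]; module
  have cf_u0 : ⁅f, (Hα + (3:ℂ) • Hβ)⁆ = 0 := by
    rw [hf]; simp only [add_lie, lie_add, smul_lie, lie_smul, lie_self, hG2.bracket_hh, hba]; module
  have cep_v1 : ⁅ep, X (1,0)⁆ = 0 := by
    rw [hep]; simp only [smul_lie, lie_sub, add_lie, lie_self, e_p0m1_p1p0, e_p0m1_p0p1, e_p0m1_p1p1, e_p0m1_p2p1, e_p0m1_p3p1, e_p0m1_p3p2, e_p0m1_m1p0, e_p0m1_m1m1, e_p0m1_m2m1, e_p0m1_m3m1, e_p0m1_m3m2, e_p3p2_p1p0, e_p3p2_p0p1, e_p3p2_p1p1, e_p3p2_p2p1, e_p3p2_p3p1, e_p3p2_m1p0, e_p3p2_p0m1, e_p3p2_m1m1, e_p3p2_m2m1, e_p3p2_m3m1, e_p3p2_m3m2, e_p0p1_p1p0, e_p0p1_p1p1, e_p0p1_p2p1, e_p0p1_p3p1,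 e_p0p1_p3p2, e_p0p1_m1p0, e_p0p1_p0m1, e_p0p1_m1m1, e_p0p1_m2m1, e_p0p1_m3m1, e_p0p1_m3m2, e_m3m2_p1p0, e_m3m2_p0p1, e_m3m2_p1p1, e_m3m2_p2p1, e_m3m2_p3p1, e_m3m2_p3p2, e_m3m2_m1p0, e_m3m2_p0m1, e_m3m2_m1m1, e_m3m2_m2m1, e_m3m2_m3m1]; module
  have cep_v0 : ⁅ep, X (1,1)⁆ = (Real.sqrt 2 : ℂ) • X (1,0) := by
    rw [hep]; simp only [smul_lie, lie_sub, add_lie, lie_self, e_p0m1_p1p0, e_p0m1_p0p1, e_p0m1_p1p1, e_p0m1_p2p1, e_p0m1_p3p1, e_p0m1_p3p2, e_p0m1_m1p0, e_p0m1_m1m1, e_p0m1_m2m1, e_p0m1_m3m1, e_p0m1_m3m2, e_p3p2_p1p0, e_p3p2_p0p1, e_p3p2_p1p1, e_p3p2_p2p1, e_p3p2_p3p1, e_p3p2_m1p0, e_p3p2_p0m1, e_p3p2_m1m1, e_p3p2_m2m1, e_p3p2_m3m1, e_p3p2_m3m2, e_p0p1_p1p0, e_p0p1_p1p1, e_p0p1_p2p1,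 e_p0p1_p3p1, e_p0p1_p3p2, e_p0p1_m1p0, e_p0p1_p0m1, e_p0p1_m1m1, e_p0p1_m2m1, e_p0p1_m3m1, e_p0p1_m3m2, e_m3m2_p1p0, e_m3m2_p0p1, e_m3m2_p1p1, e_m3m2_p2p1, e_m3m2_p3p1, e_m3m2_p3p2, e_m3m2_m1p0, e_m3m2_p0m1, e_m3m2_m1m1, e_m3m2_m2m1, e_m3m2_m3m1]; module
  have cep_vm : ⁅ep, X (-2,-1)⁆ = (Real.sqrt 2 : ℂ) • X (1,1) := by
    rw [hep]; simp only [smul_lie, lie_sub, add_lie, lie_self, e_p0m1_p1p0, e_p0m1_p0p1, e_p0m1_p1p1, e_p0m1_p2p1, e_p0m1_p3p1, e_p0m1_p3p2, e_p0m1_m1p0, e_p0m1_m1m1, e_p0m1_m2m1, e_p0m1_m3m1, e_p0m1_m3m2, e_p3p2_p1p0, e_p3p2_p0p1, e_p3p2_p1p1, e_p3p2_p2p1, e_p3p2_p3p1, e_p3p2_m1p0, e_p3p2_p0m1, e_p3p2_m1m1, e_p3p2_m2m1, e_p3p2_m3m1, e_p3p2_m3m2, e_p0p1_p1p0, e_p0p1_p1p1,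 e_p0p1_p2p1, e_p0p1_p3p1, e_p0p1_p3p2, e_p0p1_m1p0, e_p0p1_p0m1, e_p0p1_m1m1, e_p0p1_m2m1, e_p0p1_m3m1, e_p0p1_m3m2, e_m3m2_p1p0, e_m3m2_p0p1, e_m3m2_p1p1, e_m3m2_p2p1, e_m3m2_p3p1, e_m3m2_p3p2, e_m3m2_m1p0, e_m3m2_p0m1, e_m3m2_m1m1, e_m3m2_m2m1, e_m3m2_m3m1]; module
  have cep_w1 : ⁅ep, X (2,1)⁆ = 0 := by
    rw [hep]; simp only [smul_lie, lie_sub, add_lie, lie_self, e_p0m1_p1p0, e_p0m1_p0p1, e_p0m1_p1p1, e_p0m1_p2p1, e_p0m1_p3p1, e_p0m1_p3p2, e_p0m1_m1p0, e_p0m1_m1m1, e_p0m1_m2m1, e_p0m1_m3m1, e_p0m1_m3m2, e_p3p2_p1p0, e_p3p2_p0p1, e_p3p2_p1p1, e_p3p2_p2p1, e_p3p2_p3p1, e_p3p2_m1p0, e_p3p2_p0m1, e_p3p2_m1m1, e_p3p2_m2m1, e_p3p2_m3m1, e_p3p2_m3m2, e_p0p1_p1p0, e_p0p1_p1p1, e_p0p1_p2p1,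 e_p0p1_p3p1, e_p0p1_p3p2, e_p0p1_m1p0, e_p0p1_p0m1, e_p0p1_m1m1, e_p0p1_m2m1, e_p0p1_m3m1, e_p0p1_m3m2, e_m3m2_p1p0, e_m3m2_p0p1, e_m3m2_p1p1, e_m3m2_p2p1, e_m3m2_p3p1, e_m3m2_p3p2, e_m3m2_m1p0, e_m3m2_p0m1, e_m3m2_m1m1, e_m3m2_m2m1, e_m3m2_m3m1]; module
  have cep_w0 : ⁅ep, X (-1,-1)⁆ = (-(Real.sqrt 2 : ℂ)) • X (2,1) := by
    rw [hep]; simp only [smul_lie, lie_sub, add_lie, lie_self, e_p0m1_p1p0, e_p0m1_p0p1, e_p0m1_p1p1, e_p0m1_p2p1, e_p0m1_p3p1, e_p0m1_p3p2, e_p0m1_m1p0, e_p0m1_m1m1, e_p0m1_m2m1, e_p0m1_m3m1, e_p0m1_m3m2, e_p3p2_p1p0, e_p3p2_p0p1, e_p3p2_p1p1, e_p3p2_p2p1, e_p3p2_p3p1, e_p3p2_m1p0, e_p3p2_p0m1, e_p3p2_m1m1, e_p3p2_m2m1, e_p3p2_m3m1, e_p3p2_m3m2, e_p0p1_p1p0,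 e_p0p1_p1p1, e_p0p1_p2p1, e_p0p1_p3p1, e_p0p1_p3p2, e_p0p1_m1p0, e_p0p1_p0m1, e_p0p1_m1m1, e_p0p1_m2m1, e_p0p1_m3m1, e_p0p1_m3m2, e_m3m2_p1p0, e_m3m2_p0p1, e_m3m2_p1p1, e_m3m2_p2p1, e_m3m2_p3p1, e_m3m2_p3p2, e_m3m2_m1p0, e_m3m2_p0m1, e_m3m2_m1m1, e_m3m2_m2m1, e_m3m2_m3m1]; module
  have cep_wm : ⁅ep, X (-1,0)⁆ = (-(Real.sqrt 2 : ℂ)) • X (-1,-1) := by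
    rw [hep]; simp only [smul_lie, lie_sub, add_lie, lie_self, e_p0m1_p1p0, e_p0m1_p0p1, e_p0m1_p1p1, e_p0m1_p2p1, e_p0m1_p3p1, e_p0m1_p3p2, e_p0m1_m1p0, e_p0m1_m1m1, e_p0m1_m2m1, e_p0m1_m3m1, e_p0m1_m3m2, e_p3p2_p1p0, e_p3p2_p0p1, e_p3p2_p1p1, e_p3p2_p2p1, e_p3p2_p3p1, e_p3p2_m1p0, e_p3p2_p0m1, e_p3p2_m1m1, e_p3p2_m2m1, e_p3p2_m3m1, e_p3p2_m3m2, e_p0p1_p1p0, e_p0p1_p1p1, e_p0p1_p2p1, e_p0p1_p3p1, e_p0p1_p3p2, e_p0p1_m1p0, e_p0p1_p0m1, e_p0p1_m1m1, e_p0p1_m2m1, e_p0p1_m3m1, e_p0p1_m3m2, e_m3m2_p1p0, e_m3m2_p0p1, e_m3m2_p1p1, e_m3m2_p2p1, e_m3m2_p3p1, e_m3m2_p3p2, e_m3m2_m1p0, e_m3m2_p0m1, e_m3m2_m1m1, e_m3m2_m2m1, e_m3m2_m3m1]; module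
  have cep_u2 : ⁅ep, X (3,1)⁆ = 0 := by
    rw [hep]; simp only [smul_lie, lie_sub, add_lie, lie_self, e_p0m1_p1p0, e_p0m1_p0p1, e_p0m1_p1p1, e_p0m1_p2p1, e_p0m1_p3p1, e_p0m1_p3p2, e_p0m1_m1p0, e_p0m1_m1m1, e_p0m1_m2m1, e_p0m1_m3m1, e_p0m1_m3m2, e_p3p2_p1p0, e_p3p2_p0p1, e_p3p2_p1p1, e_p3p2_p2p1, e_p3p2_p3p1, e_p3p2_m1p0, e_p3p2_p0m1, e_p3p2_m1m1, e_p3p2_m2m1, e_p3p2_m3m1, e_p3p2_m3m2, e_p0p1_p1p0, e_p0p1_p1p1, e_p0p1_p2p1, e_p0p1_p3p1, e_p0p1_p3p2, e_p0p1_m1p0, e_p0p1_p0m1, e_p0p1_m1m1, e_p0p1_m2m1, e_p0p1_m3m1, e_p0p1_m3m2, e_m3m2_p1p0, e_m3m2_p0p1, e_m3m2_p1p1, e_m3m2_p2p1, e_m3m2_p3p1, e_m3m2_p3p2, e_m3m2_m1p0, e_m3m2_p0m1, e_m3m2_m1m1, e_m3m2_m2m1, e_m3m2_m3m1]; module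
  have cep_um2 : ⁅ep, X (-3,-1)⁆ = (Real.sqrt 2 : ℂ) • (X (0,1) - X (-3,-2)) := by
    rw [hep]; simp only [smul_lie, lie_sub, add_lie, lie_self, e_p0m1_p1p0, e_p0m1_p0p1, e_p0m1_p1p1, e_p0m1_p2p1, e_p0m1_p3p1, e_p0m1_p3p2, e_p0m1_m1p0, e_p0m1_m1m1, e_p0m1_m2m1, e_p0m1_m3m1, e_p0m1_m3m2, e_p3p2_p1p0, e_p3p2_p0p1, e_p3p2_p1p1, e_p3p2_p2p1, e_p3p2_p3p1, e_p3p2_m1p0, e_p3p2_p0m1, e_p3p2_m1m1, e_p3p2_m2m1, e_p3p2_m3m1, e_p3p2_m3m2, e_p0p1_p1p0, e_p0p1_p1p1, e_p0p1_p2p1, e_p0p1_p3p1, e_p0p1_p3p2, e_p0p1_m1p0, e_p0p1_p0m1, e_p0p1_m1m1, e_p0p1_m2m1, e_p0p1_m3m1, e_p0p1_m3m2, e_m3m2_p1p0, e_m3m2_p0p1, e_m3m2_p1p1, e_m3m2_p2p1, e_m3m2_p3p1, e_m3m2_p3p2, e_m3m2_m1p0, e_m3m2_p0m1, e_m3m2_m1m1,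 e_m3m2_m2m1, e_m3m2_m3m1]; module
  have cep_u1 : ⁅ep, (X (0,-1) - X (3,2))⁆ = ((-2:ℂ) * (Real.sqrt 2 : ℂ)) • X (3,1) := by
    rw [hep]; simp only [smul_lie, lie_sub, add_lie, lie_self, e_p0m1_p1p0, e_p0m1_p0p1, e_p0m1_p1p1, e_p0m1_p2p1, e_p0m1_p3p1, e_p0m1_p3p2, e_p0m1_m1p0, e_p0m1_m1m1, e_p0m1_m2m1, e_p0m1_m3m1, e_p0m1_m3m2, e_p3p2_p1p0, e_p3p2_p0p1, e_p3p2_p1p1, e_p3p2_p2p1, e_p3p2_p3p1, e_p3p2_m1p0, e_p3p2_p0m1, e_p3p2_m1m1, e_p3p2_m2m1, e_p3p2_m3m1, e_p3p2_m3m2, e_p0p1_p1p0, e_p0p1_p1p1, e_p0p1_p2p1, e_p0p1_p3p1, e_p0p1_p3p2, e_p0p1_m1p0, e_p0p1_p0m1, e_p0p1_m1m1, e_p0p1_m2m1, e_p0p1_m3m1, e_p0p1_m3m2, e_m3m2_p1p0, e_m3m2_p0p1, e_m3m2_p1p1, e_m3m2_p2p1, e_m3m2_p3p1, e_m3m2_p3p2,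 e_m3m2_m1p0, e_m3m2_p0m1, e_m3m2_m1m1, e_m3m2_m2m1, e_m3m2_m3m1]; module
  have cep_um1 : ⁅ep, (X (0,1) - X (-3,-2))⁆ = (-(Real.sqrt 2 : ℂ)) • (Hα + (3:ℂ) • Hβ) := by
    rw [hep]; simp only [smul_lie, lie_sub, add_lie, lie_self, e_p0m1_p1p0, e_p0m1_p0p1, e_p0m1_p1p1, e_p0m1_p2p1, e_p0m1_p3p1, e_p0m1_p3p2, e_p0m1_m1p0, e_p0m1_m1m1, e_p0m1_m2m1, e_p0m1_m3m1, e_p0m1_m3m2, e_p3p2_p1p0, e_p3p2_p0p1, e_p3p2_p1p1, e_p3p2_p2p1, e_p3p2_p3p1, e_p3p2_m1p0, e_p3p2_p0m1, e_p3p2_m1m1, e_p3p2_m2m1, e_p3p2_m3m1, e_p3p2_m3m2, e_p0p1_p1p0, e_p0p1_p1p1, e_p0p1_p2p1, e_p0p1_p3p1, e_p0p1_p3p2, e_p0p1_m1p0, e_p0p1_p0m1, e_p0p1_m1m1, e_p0p1_m2m1, e_p0p1_m3m1, e_p0p1_m3m2, e_m3m2_p1p0, e_m3m2_p0p1, e_m3m2_p1p1,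 e_m3m2_p2p1, e_m3m2_p3p1, e_m3m2_p3p2, e_m3m2_m1p0, e_m3m2_p0m1, e_m3m2_m1m1, e_m3m2_m2m1, e_m3m2_m3m1]; module
  have cep_u0 : ⁅ep, (Hα + (3:ℂ) • Hβ)⁆ = ((3:ℂ) * (Real.sqrt 2 : ℂ)) • (X (0,-1) - X (3,2)) := by
    rw [← lie_skew, hep]; simp only [lie_smul, lie_add, add_lie, smul_lie, ha_p0m1, hb_p0m1, ha_p3p2, hb_p3p2]; module
  have cem_v1 : ⁅em, X (1,0)⁆ = (Real.sqrt 2 : ℂ) • X (1,1) := by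
    rw [hem]; simp only [smul_lie, lie_sub, add_lie, lie_self, e_p0m1_p1p0, e_p0m1_p0p1, e_p0m1_p1p1, e_p0m1_p2p1, e_p0m1_p3p1, e_p0m1_p3p2, e_p0m1_m1p0, e_p0m1_m1m1, e_p0m1_m2m1, e_p0m1_m3m1, e_p0m1_m3m2, e_p3p2_p1p0, e_p3p2_p0p1, e_p3p2_p1p1, e_p3p2_p2p1, e_p3p2_p3p1, e_p3p2_m1p0, e_p3p2_p0m1, e_p3p2_m1m1, e_p3p2_m2m1, e_p3p2_m3m1, e_p3p2_m3m2, e_p0p1_p1p0, e_p0p1_p1p1, e_p0p1_p2p1, e_p0p1_p3p1, e_p0p1_p3p2, e_p0p1_m1p0, e_p0p1_p0m1, e_p0p1_m1m1, e_p0p1_m2m1, e_p0p1_m3m1, e_p0p1_m3m2, e_m3m2_p1p0, e_m3m2_p0p1, e_m3m2_p1p1, e_m3m2_p2p1, e_m3m2_p3p1, e_m3m2_p3p2, e_m3m2_m1p0, e_m3m2_p0m1, e_m3m2_m1m1, e_m3m2_m2m1, e_m3m2_m3m1]; module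
  have cem_v0 : ⁅em, X (1,1)⁆ = (Real.sqrt 2 : ℂ) • X (-2,-1) := by
    rw [hem]; simp only [smul_lie, lie_sub, add_lie, lie_self, e_p0m1_p1p0, e_p0m1_p0p1, e_p0m1_p1p1, e_p0m1_p2p1, e_p0m1_p3p1, e_p0m1_p3p2, e_p0m1_m1p0, e_p0m1_m1m1, e_p0m1_m2m1, e_p0m1_m3m1, e_p0m1_m3m2, e_p3p2_p1p0, e_p3p2_p0p1, e_p3p2_p1p1, e_p3p2_p2p1, e_p3p2_p3p1, e_p3p2_m1p0, e_p3p2_p0m1, e_p3p2_m1m1, e_p3p2_m2m1, e_p3p2_m3m1, e_p3p2_m3m2, e_p0p1_p1p0, e_p0p1_p1p1, e_p0p1_p2p1, e_p0p1_p3p1, e_p0p1_p3p2, e_p0p1_m1p0, e_p0p1_p0m1, e_p0p1_m1m1, e_p0p1_m2m1, e_p0p1_m3m1, e_p0p1_m3m2, e_m3m2_p1p0, e_m3m2_p0p1, e_m3m2_p1p1, e_m3m2_p2p1, e_m3m2_p3p1, e_m3m2_p3p2, e_m3m2_m1p0, e_m3m2_p0m1, e_m3m2_m1m1, e_m3m2_m2m1,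 e_m3m2_m3m1]; module
  have cem_vm : ⁅em, X (-2,-1)⁆ = 0 := by
    rw [hem]; simp only [smul_lie, lie_sub, add_lie, lie_self, e_p0m1_p1p0, e_p0m1_p0p1, e_p0m1_p1p1, e_p0m1_p2p1, e_p0m1_p3p1, e_p0m1_p3p2, e_p0m1_m1p0, e_p0m1_m1m1, e_p0m1_m2m1, e_p0m1_m3m1, e_p0m1_m3m2, e_p3p2_p1p0, e_p3p2_p0p1, e_p3p2_p1p1, e_p3p2_p2p1, e_p3p2_p3p1, e_p3p2_m1p0, e_p3p2_p0m1, e_p3p2_m1m1, e_p3p2_m2m1, e_p3p2_m3m1, e_p3p2_m3m2, e_p0p1_p1p0, e_p0p1_p1p1, e_p0p1_p2p1, e_p0p1_p3p1, e_p0p1_p3p2, e_p0p1_m1p0, e_p0p1_p0m1, e_p0p1_m1m1, e_p0p1_m2m1, e_p0p1_m3m1, e_p0p1_m3m2, e_m3m2_p1p0, e_m3m2_p0p1, e_m3m2_p1p1, e_m3m2_p2p1, e_m3m2_p3p1, e_m3m2_p3p2, e_m3m2_m1p0, e_m3m2_p0m1, e_m3m2_m1m1, e_m3m2_m2m1, e_m3m2_m3m1];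 module
  have cem_w1 : ⁅em, X (2,1)⁆ = (-(Real.sqrt 2 : ℂ)) • X (-1,-1) := by
    rw [hem]; simp only [smul_lie, lie_sub, add_lie, lie_self, e_p0m1_p1p0, e_p0m1_p0p1, e_p0m1_p1p1, e_p0m1_p2p1, e_p0m1_p3p1, e_p0m1_p3p2, e_p0m1_m1p0, e_p0m1_m1m1, e_p0m1_m2m1, e_p0m1_m3m1, e_p0m1_m3m2, e_p3p2_p1p0, e_p3p2_p0p1, e_p3p2_p1p1, e_p3p2_p2p1, e_p3p2_p3p1, e_p3p2_m1p0, e_p3p2_p0m1, e_p3p2_m1m1, e_p3p2_m2m1, e_p3p2_m3m1, e_p3p2_m3m2, e_p0p1_p1p0, e_p0p1_p1p1, e_p0p1_p2p1, e_p0p1_p3p1, e_p0p1_p3p2, e_p0p1_m1p0, e_p0p1_p0m1, e_p0p1_m1m1, e_p0p1_m2m1, e_p0p1_m3m1, e_p0p1_m3m2, e_m3m2_p1p0, e_m3m2_p0p1, e_m3m2_p1p1, e_m3m2_p2p1, e_m3m2_p3p1, e_m3m2_p3p2, e_m3m2_m1p0, e_m3m2_p0m1, e_m3m2_m1m1, e_m3m2_m2m1,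 e_m3m2_m3m1]; module
  have cem_w0 : ⁅em, X (-1,-1)⁆ = (-(Real.sqrt 2 : ℂ)) • X (-1,0) := by
    rw [hem]; simp only [smul_lie, lie_sub, add_lie, lie_self, e_p0m1_p1p0, e_p0m1_p0p1, e_p0m1_p1p1, e_p0m1_p2p1, e_p0m1_p3p1, e_p0m1_p3p2, e_p0m1_m1p0, e_p0m1_m1m1, e_p0m1_m2m1, e_p0m1_m3m1, e_p0m1_m3m2, e_p3p2_p1p0, e_p3p2_p0p1, e_p3p2_p1p1, e_p3p2_p2p1, e_p3p2_p3p1, e_p3p2_m1p0, e_p3p2_p0m1, e_p3p2_m1m1, e_p3p2_m2m1, e_p3p2_m3m1, e_p3p2_m3m2, e_p0p1_p1p0, e_p0p1_p1p1, e_p0p1_p2p1, e_p0p1_p3p1, e_p0p1_p3p2, e_p0p1_m1p0, e_p0p1_p0m1, e_p0p1_m1m1, e_p0p1_m2m1, e_p0p1_m3m1, e_p0p1_m3m2, e_m3m2_p1p0, e_m3m2_p0p1, e_m3m2_p1p1, e_m3m2_p2p1, e_m3m2_p3p1, e_m3m2_p3p2, e_m3m2_m1p0, e_m3m2_p0m1,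 e_m3m2_m1m1, e_m3m2_m2m1, e_m3m2_m3m1]; module
  have cem_wm : ⁅em, X (-1,0)⁆ = 0 := by
    rw [hem]; simp only [smul_lie, lie_sub, add_lie, lie_self, e_p0m1_p1p0, e_p0m1_p0p1, e_p0m1_p1p1, e_p0m1_p2p1, e_p0m1_p3p1, e_p0m1_p3p2, e_p0m1_m1p0, e_p0m1_m1m1, e_p0m1_m2m1, e_p0m1_m3m1, e_p0m1_m3m2, e_p3p2_p1p0, e_p3p2_p0p1, e_p3p2_p1p1, e_p3p2_p2p1, e_p3p2_p3p1, e_p3p2_m1p0, e_p3p2_p0m1, e_p3p2_m1m1, e_p3p2_m2m1, e_p3p2_m3m1, e_p3p2_m3m2, e_p0p1_p1p0, e_p0p1_p1p1, e_p0p1_p2p1, e_p0p1_p3p1, e_p0p1_p3p2, e_p0p1_m1p0, e_p0p1_p0m1, e_p0p1_m1m1, e_p0p1_m2m1, e_p0p1_m3m1, e_p0p1_m3m2, e_m3m2_p1p0, e_m3m2_p0p1, e_m3m2_p1p1, e_m3m2_p2p1, e_m3m2_p3p1, e_m3m2_p3p2, e_m3m2_m1p0, e_m3m2_p0m1, e_m3m2_m1m1,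 e_m3m2_m2m1, e_m3m2_m3m1]; module
  have cem_u2 : ⁅em, X (3,1)⁆ = (-(Real.sqrt 2 : ℂ)) • (X (0,-1) - X (3,2)) := by
    rw [hem]; simp only [smul_lie, lie_sub, add_lie, lie_self, e_p0m1_p1p0, e_p0m1_p0p1, e_p0m1_p1p1, e_p0m1_p2p1, e_p0m1_p3p1, e_p0m1_p3p2, e_p0m1_m1p0, e_p0m1_m1m1, e_p0m1_m2m1, e_p0m1_m3m1, e_p0m1_m3m2, e_p3p2_p1p0, e_p3p2_p0p1, e_p3p2_p1p1, e_p3p2_p2p1, e_p3p2_p3p1, e_p3p2_m1p0, e_p3p2_p0m1, e_p3p2_m1m1, e_p3p2_m2m1, e_p3p2_m3m1, e_p3p2_m3m2, e_p0p1_p1p0, e_p0p1_p1p1, e_p0p1_p2p1, e_p0p1_p3p1, e_p0p1_p3p2, e_p0p1_m1p0, e_p0p1_p0m1, e_p0p1_m1m1, e_p0p1_m2m1, e_p0p1_m3m1, e_p0p1_m3m2, e_m3m2_p1p0, e_m3m2_p0p1, e_m3m2_p1p1, e_m3m2_p2p1, e_m3m2_p3p1, e_m3m2_p3p2, e_m3m2_m1p0,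 e_m3m2_p0m1, e_m3m2_m1m1, e_m3m2_m2m1, e_m3m2_m3m1]; module
  have cem_um2 : ⁅em, X (-3,-1)⁆ = 0 := by
    rw [hem]; simp only [smul_lie, lie_sub, add_lie, lie_self, e_p0m1_p1p0, e_p0m1_p0p1, e_p0m1_p1p1, e_p0m1_p2p1, e_p0m1_p3p1, e_p0m1_p3p2, e_p0m1_m1p0, e_p0m1_m1m1, e_p0m1_m2m1, e_p0m1_m3m1, e_p0m1_m3m2, e_p3p2_p1p0, e_p3p2_p0p1, e_p3p2_p1p1, e_p3p2_p2p1, e_p3p2_p3p1, e_p3p2_m1p0, e_p3p2_p0m1, e_p3p2_m1m1, e_p3p2_m2m1, e_p3p2_m3m1, e_p3p2_m3m2, e_p0p1_p1p0, e_p0p1_p1p1, e_p0p1_p2p1, e_p0p1_p3p1, e_p0p1_p3p2, e_p0p1_m1p0, e_p0p1_p0m1, e_p0p1_m1m1, e_p0p1_m2m1, e_p0p1_m3m1, e_p0p1_m3m2, e_m3m2_p1p0, e_m3m2_p0p1, e_m3m2_p1p1, e_m3m2_p2p1, e_m3m2_p3p1, e_m3m2_p3p2, e_m3m2_m1p0,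 e_m3m2_p0m1, e_m3m2_m1m1, e_m3m2_m2m1, e_m3m2_m3m1]; module
  have cem_u1 : ⁅em, (X (0,-1) - X (3,2))⁆ = (Real.sqrt 2 : ℂ) • (Hα + (3:ℂ) • Hβ) := by
    rw [hem]; simp only [smul_lie, lie_sub, add_lie, lie_self, e_p0m1_p1p0, e_p0m1_p0p1, e_p0m1_p1p1, e_p0m1_p2p1, e_p0m1_p3p1, e_p0m1_p3p2, e_p0m1_m1p0, e_p0m1_m1m1, e_p0m1_m2m1, e_p0m1_m3m1, e_p0m1_m3m2, e_p3p2_p1p0, e_p3p2_p0p1, e_p3p2_p1p1, e_p3p2_p2p1, e_p3p2_p3p1, e_p3p2_m1p0, e_p3p2_p0m1, e_p3p2_m1m1, e_p3p2_m2m1, e_p3p2_m3m1, e_p3p2_m3m2, e_p0p1_p1p0, e_p0p1_p1p1, e_p0p1_p2p1, e_p0p1_p3p1, e_p0p1_p3p2, e_p0p1_m1p0, e_p0p1_p0m1, e_p0p1_m1m1, e_p0p1_m2m1, e_p0p1_m3m1, e_p0p1_m3m2, e_m3m2_p1p0, e_m3m2_p0p1, e_m3m2_p1p1, e_m3m2_p2p1,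 e_m3m2_p3p1, e_m3m2_p3p2, e_m3m2_m1p0, e_m3m2_p0m1, e_m3m2_m1m1, e_m3m2_m2m1, e_m3m2_m3m1]; module
  have cem_um1 : ⁅em, (X (0,1) - X (-3,-2))⁆ = ((2:ℂ) * (Real.sqrt 2 : ℂ)) • X (-3,-1) := by
    rw [hem]; simp only [smul_lie, lie_sub, add_lie, lie_self, e_p0m1_p1p0, e_p0m1_p0p1, e_p0m1_p1p1, e_p0m1_p2p1, e_p0m1_p3p1, e_p0m1_p3p2, e_p0m1_m1p0, e_p0m1_m1m1, e_p0m1_m2m1, e_p0m1_m3m1, e_p0m1_m3m2, e_p3p2_p1p0, e_p3p2_p0p1, e_p3p2_p1p1, e_p3p2_p2p1, e_p3p2_p3p1, e_p3p2_m1p0, e_p3p2_p0m1, e_p3p2_m1m1, e_p3p2_m2m1, e_p3p2_m3m1, e_p3p2_m3m2, e_p0p1_p1p0, e_p0p1_p1p1, e_p0p1_p2p1, e_p0p1_p3p1, e_p0p1_p3p2, e_p0p1_m1p0, e_p0p1_p0m1, e_p0p1_m1m1, e_p0p1_m2m1, e_p0p1_m3m1, e_p0p1_m3m2, e_m3m2_p1p0,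 e_m3m2_p0p1, e_m3m2_p1p1, e_m3m2_p2p1, e_m3m2_p3p1, e_m3m2_p3p2, e_m3m2_m1p0, e_m3m2_p0m1, e_m3m2_m1m1, e_m3m2_m2m1, e_m3m2_m3m1]; module
  have cem_u0 : ⁅em, (Hα + (3:ℂ) • Hβ)⁆ = ((-3:ℂ) * (Real.sqrt 2 : ℂ)) • (X (0,1) - X (-3,-2)) := by
    rw [← lie_skew, hem]; simp only [lie_smul, lie_add, add_lie, smul_lie, ha_p0p1, hb_p0p1, ha_m3m2, hb_m3m2]; module
  have hb14 : LinearIndependent ℂ ![f, ep, em, X (1,0), X (1,1), X (-2,-1), X (2,1),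
      X (-1,-1), X (-1,0), X (3,1), X (0,-1) - X (3,2), Hα + (3:ℂ) • Hβ,
      X (0,1) - X (-3,-2), X (-3,-1)] := by
    rw [Fintype.linearIndependent_iff]
    intro g hg
    rw [sum14] at hg
    have hg' : g 0 • f + g 1 • ep + g 2 • em + g 3 • X (1,0) + g 4 • X (1,1) +
        g 5 • X (-2,-1) + g 6 • X (2,1) + g 7 • X (-1,-1) + g 8 • X (-1,0) +
        g 9 • X (3,1) + g 10 • (X (0,-1) - X (3,2)) + g 11 • (Hα + (3:ℂ) • Hβ) +
        g 12 • (X (0,1) - X (-3,-2)) + g 13 • X (-3,-1) = 0 := hg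
    rw [hf, hep, hem] at hg'
    have h14 := Fintype.linearIndependent_iff.mp hG2.indep
      (![2*g 0 + g 11, 2*g 0 + 3*g 11, g 3, g 8,
         (Real.sqrt 2:ℂ)*g 2 + g 12, (Real.sqrt 2:ℂ)*g 1 + g 10, g 4, g 7, g 6, g 5,
         g 9, g 13, (Real.sqrt 2:ℂ)*g 1 - g 10, (Real.sqrt 2:ℂ)*g 2 - g 12]) ?_
    · have h0 : 2*g 0 + g 11 = 0 := h14 0
      have h1 : 2*g 0 + 3*g 11 = 0 := h14 1
      have h3 : g 3 = 0 := h14 2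
      have h8 : g 8 = 0 := h14 3
      have hA : (Real.sqrt 2:ℂ)*g 2 + g 12 = 0 := h14 4
      have hB : (Real.sqrt 2:ℂ)*g 1 + g 10 = 0 := h14 5
      have h4 : g 4 = 0 := h14 6
      have h7 : g 7 = 0 := h14 7
      have h6 : g 6 = 0 := h14 8
      have h5 : g 5 = 0 := h14 9
      have h9 : g 9 = 0 := h14 10
      have h13 : g 13 = 0 := h14 11
      have hC : (Real.sqrt 2:ℂ)*g 1 - g 10 = 0 := h14 12
      have hD : (Real.sqrt 2:ℂ)*g 2 - g 12 = 0 := h14 13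
      have e0 : g 0 = 0 := by linear_combination (3/4:ℂ) * h0 - (1/4:ℂ) * h1
      have e11 : g 11 = 0 := by linear_combination (1/2:ℂ) * h1 - (1/2:ℂ) * h0
      have e1 : g 1 = 0 := by
        have h : (Real.sqrt 2:ℂ) * (g 1 * 2) = 0 := by linear_combination hB + hC
        rcases mul_eq_zero.mp h with h' | h'
        · exact absurd h' hs
        · rcases mul_eq_zero.mp h' with h'' | h''
          · exact h''
          · norm_num at h''
      have e10 : g 10 = 0 := by linear_combination hB - (Real.sqrt 2:ℂ) * e1
      have e2 : g 2 = 0 := by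
        have h : (Real.sqrt 2:ℂ) * (g 2 * 2) = 0 := by linear_combination hA + hD
        rcases mul_eq_zero.mp h with h' | h'
        · exact absurd h' hs
        · rcases mul_eq_zero.mp h' with h'' | h''
          · exact h''
          · norm_num at h''
      have e12 : g 12 = 0 := by linear_combination hA - (Real.sqrt 2:ℂ) * e2
      intro i
      fin_cases i <;> simp only <;> assumption
    · rw [sum14]
      show (2*g 0 + g 11) • Hα + (2*g 0 + 3*g 11) • Hβ + g 3 • X (1,0) + g 8 • X (-1,0) +
        ((Real.sqrt 2:ℂ)*g 2 + g 12) • X (0,1) + ((Real.sqrt 2:ℂ)*g 1 + g 10) • X (0,-1) +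
        g 4 • X (1,1) + g 7 • X (-1,-1) + g 6 • X (2,1) + g 5 • X (-2,-1) +
        g 9 • X (3,1) + g 13 • X (-3,-1) + ((Real.sqrt 2:ℂ)*g 1 - g 10) • X (3,2) +
        ((Real.sqrt 2:ℂ)*g 2 - g 12) • X (-3,-2) = 0
      linear_combination (norm := module) hg'
  have inv1 : ∀ x ∈ Submodule.span ℂ ({f, ep, em} : Set L), ∀ v ∈ V1four X,
      ⁅x, v⁆ ∈ V1four X := by
    have hb : ∀ g ∈ ({f, ep, em} : Set L), ∀ t ∈ ({X (1,0), X (1,1), X (-2,-1)} : Set L),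
        ⁅g, t⁆ ∈ Submodule.span ℂ ({X (1,0), X (1,1), X (-2,-1)} : Set L) := by
      rintro g (rfl | rfl | rfl) t (rfl | rfl | rfl)
      · rw [cf_v1]; exact Submodule.smul_mem _ _ (Submodule.subset_span (Set.mem_insert _ _))
      · rw [cf_v0]; exact Submodule.zero_mem _
      · rw [cf_vm]; exact Submodule.smul_mem _ _ (Submodule.subset_span (Set.mem_insert_of_mem _ (Set.mem_insert_of_mem _ rfl)))
      · rw [cep_v1]; exact Submodule.zero_mem _
      · rw [cep_v0]; exact Submodule.smul_mem _ _ (Submodule.subset_span (Set.mem_insert _ _))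
      · rw [cep_vm]; exact Submodule.smul_mem _ _ (Submodule.subset_span (Set.mem_insert_of_mem _ (Set.mem_insert _ _)))
      · rw [cem_v1]; exact Submodule.smul_mem _ _ (Submodule.subset_span (Set.mem_insert_of_mem _ (Set.mem_insert _ _)))
      · rw [cem_v0]; exact Submodule.smul_mem _ _ (Submodule.subset_span (Set.mem_insert_of_mem _ (Set.mem_insert_of_mem _ rfl)))
      · rw [cem_vm]; exact Submodule.zero_mem _
    exact span_bracket hb
  have inv2 : ∀ x ∈ Submodule.span ℂ ({f, ep, em} : Set L), ∀ v ∈ V2four X,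
      ⁅x, v⁆ ∈ V2four X := by
    have hb : ∀ g ∈ ({f, ep, em} : Set L), ∀ t ∈ ({X (-1,0), X (-1,-1), X (2,1)} : Set L),
        ⁅g, t⁆ ∈ Submodule.span ℂ ({X (-1,0), X (-1,-1), X (2,1)} : Set L) := by
      rintro g (rfl | rfl | rfl) t (rfl | rfl | rfl)
      · rw [cf_wm]; exact Submodule.smul_mem _ _ (Submodule.subset_span (Set.mem_insert _ _))
      · rw [cf_w0]; exact Submodule.zero_mem _
      · rw [cf_w1]; exact Submodule.smul_mem _ _ (Submodule.subset_span (Set.mem_insert_of_mem _ (Set.mem_insert_of_mem _ rfl)))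
      · rw [cep_wm]; exact Submodule.smul_mem _ _ (Submodule.subset_span (Set.mem_insert_of_mem _ (Set.mem_insert _ _)))
      · rw [cep_w0]; exact Submodule.smul_mem _ _ (Submodule.subset_span (Set.mem_insert_of_mem _ (Set.mem_insert_of_mem _ rfl)))
      · rw [cep_w1]; exact Submodule.zero_mem _
      · rw [cem_wm]; exact Submodule.zero_mem _
      · rw [cem_w0]; exact Submodule.smul_mem _ _ (Submodule.subset_span (Set.mem_insert _ _))
      · rw [cem_w1]; exact Submodule.smul_mem _ _ (Submodule.subset_span (Set.mem_insert_of_mem _ (Set.mem_insert _ _)))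
    exact span_bracket hb
  have inv3 : ∀ x ∈ Submodule.span ℂ ({f, ep, em} : Set L), ∀ v ∈ V3four Hα Hβ X,
      ⁅x, v⁆ ∈ V3four Hα Hβ X := by
    have hb : ∀ g ∈ ({f, ep, em} : Set L), ∀ t ∈ ({X (3,1), X (-3,-1), Hα + (3:ℂ) • Hβ, X (0,1) - X (-3,-2), X (0,-1) - X (3,2)} : Set L),
        ⁅g, t⁆ ∈ Submodule.span ℂ ({X (3,1), X (-3,-1), Hα + (3:ℂ) • Hβ, X (0,1) - X (-3,-2), X (0,-1) - X (3,2)} : Set L) := by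
      rintro g (rfl | rfl | rfl) t (rfl | rfl | rfl | rfl | rfl)
      · rw [cf_u2]; exact Submodule.smul_mem _ _ (Submodule.subset_span (Set.mem_insert _ _))
      · rw [cf_um2]; exact Submodule.smul_mem _ _ (Submodule.subset_span (Set.mem_insert_of_mem _ (Set.mem_insert _ _)))
      · rw [cf_u0]; exact Submodule.zero_mem _
      · rw [cf_um1]; exact Submodule.smul_mem _ _ (Submodule.subset_span (Set.mem_insert_of_mem _ (Set.mem_insert_of_mem _ (Set.mem_insert_of_mem _ (Set.mem_insert _ _)))))
      · rw [cf_u1]; exact Submodule.smul_mem _ _ (Submodule.subset_span (Set.mem_insert_of_mem _ (Set.mem_insert_of_mem _ (Set.mem_insert_of_mem _ (Set.mem_insert_of_mem _ rfl)))))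
      · rw [cep_u2]; exact Submodule.zero_mem _
      · rw [cep_um2]; exact Submodule.smul_mem _ _ (Submodule.subset_span (Set.mem_insert_of_mem _ (Set.mem_insert_of_mem _ (Set.mem_insert_of_mem _ (Set.mem_insert _ _)))))
      · rw [cep_u0]; exact Submodule.smul_mem _ _ (Submodule.subset_span (Set.mem_insert_of_mem _ (Set.mem_insert_of_mem _ (Set.mem_insert_of_mem _ (Set.mem_insert_of_mem _ rfl)))))
      · rw [cep_um1]; exact Submodule.smul_mem _ _ (Submodule.subset_span (Set.mem_insert_of_mem _ (Set.mem_insert_of_mem _ (Set.mem_insert _ _))))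
      · rw [cep_u1]; exact Submodule.smul_mem _ _ (Submodule.subset_span (Set.mem_insert _ _))
      · rw [cem_u2]; exact Submodule.smul_mem _ _ (Submodule.subset_span (Set.mem_insert_of_mem _ (Set.mem_insert_of_mem _ (Set.mem_insert_of_mem _ (Set.mem_insert_of_mem _ rfl)))))
      · rw [cem_um2]; exact Submodule.zero_mem _
      · rw [cem_u0]; exact Submodule.smul_mem _ _ (Submodule.subset_span (Set.mem_insert_of_mem _ (Set.mem_insert_of_mem _ (Set.mem_insert_of_mem _ (Set.mem_insert _ _)))))
      · rw [cem_um1]; exact Submodule.smul_mem _ _ (Submodule.subset_span (Set.mem_insert_of_mem _ (Set.mem_insert _ _)))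
      · rw [cem_u1]; exact Submodule.smul_mem _ _ (Submodule.subset_span (Set.mem_insert_of_mem _ (Set.mem_insert_of_mem _ (Set.mem_insert _ _))))
    exact span_bracket hb
  set b' : Fin 14 → L := ![f, ep, em, X (1,0), X (1,1), X (-2,-1), X (2,1), X (-1,-1),
      X (-1,0), X (3,1), X (0,-1) - X (3,2), Hα + (3:ℂ) • Hβ, X (0,1) - X (-3,-2),
      X (-3,-1)] with hb'
  have imA : Submodule.span ℂ ({f, ep, em} : Set L) =
      Submodule.span ℂ (b' '' {0, 1, 2}) := by
    rw [Set.image_insert_eq, Set.image_insert_eq, Set.image_singleton]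
    rfl
  have im1 : V1four X = Submodule.span ℂ (b' '' {3, 4, 5}) := by
    rw [V1four, Set.image_insert_eq, Set.image_insert_eq, Set.image_singleton]
    rfl
  have im2 : V2four X = Submodule.span ℂ (b' '' {8, 7, 6}) := by
    rw [V2four, Set.image_insert_eq, Set.image_insert_eq, Set.image_singleton]
    rfl
  have im3 : V3four Hα Hβ X = Submodule.span ℂ (b' '' {9, 13, 11, 12, 10}) := by
    rw [V3four, Set.image_insert_eq, Set.image_insert_eq, Set.image_insert_eq,
      Set.image_insert_eq, Set.image_singleton]
    rfl
  have hdisjA : Submodule.span ℂ ({f, ep, em} : Set L) ⊓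
      (V1four X ⊔ V2four X ⊔ V3four Hα Hβ X) = ⊥ := by
    rw [imA, im1, im2, im3, ← Submodule.span_union, ← Submodule.span_union,
      ← Set.image_union, ← Set.image_union]
    refine disjoint_iff.mp (hb14.disjoint_span_image ?_)
    rw [Set.disjoint_left]
    rintro a (rfl | rfl | rfl) hb <;> simp at hb
  have hdisj1 : V1four X ⊓ (Submodule.span ℂ ({f, ep, em} : Set L) ⊔ V2four X ⊔
      V3four Hα Hβ X) = ⊥ := by
    rw [imA, im1, im2, im3, ← Submodule.span_union, ← Submodule.span_union,
      ← Set.image_union, ← Set.image_union]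
    refine disjoint_iff.mp (hb14.disjoint_span_image ?_)
    rw [Set.disjoint_left]
    rintro a (rfl | rfl | rfl) hb <;> simp at hb
  have hdisj2 : V2four X ⊓ (Submodule.span ℂ ({f, ep, em} : Set L) ⊔ V1four X ⊔
      V3four Hα Hβ X) = ⊥ := by
    rw [imA, im1, im2, im3, ← Submodule.span_union, ← Submodule.span_union,
      ← Set.image_union, ← Set.image_union]
    refine disjoint_iff.mp (hb14.disjoint_span_image ?_)
    rw [Set.disjoint_left]
    rintro a (rfl | rfl | rfl) hb <;> simp at hb
  have hdisj3 : V3four Hα Hβ X ⊓ (Submodule.span ℂ ({f, ep, em} : Set L) ⊔ V1four X ⊔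
      V2four X) = ⊥ := by
    rw [imA, im1, im2, im3, ← Submodule.span_union, ← Submodule.span_union,
      ← Set.image_union, ← Set.image_union]
    refine disjoint_iff.mp (hb14.disjoint_span_image ?_)
    rw [Set.disjoint_left]
    rintro a (rfl | rfl | rfl | rfl | rfl) hb <;> simp at hb
  have hsub : ∀ i : Fin 14, chev Hα Hβ X i ∈
      Submodule.span ℂ ({f, ep, em} : Set L) ⊔ V1four X ⊔ V2four X ⊔ V3four Hα Hβ X := by
    set S := Submodule.span ℂ ({f, ep, em} : Set L) ⊔ V1four X ⊔ V2four X ⊔ V3four Hα Hβ X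
      with hS
    have lA : Submodule.span ℂ ({f, ep, em} : Set L) ≤ S :=
      le_trans (le_trans le_sup_left le_sup_left) le_sup_left
    have lV1 : V1four X ≤ S := le_trans (le_trans le_sup_right le_sup_left) le_sup_left
    have lV2 : V2four X ≤ S := le_trans le_sup_right le_sup_left
    have lV3 : V3four Hα Hβ X ≤ S := le_sup_right
    have mf : f ∈ S := lA (Submodule.subset_span (by simp))
    have mep : ep ∈ S := lA (Submodule.subset_span (by simp))
    have mem' : em ∈ S := lA (Submodule.subset_span (by simp))
    have mu0 : Hα + (3:ℂ) • Hβ ∈ S := lV3 (Submodule.subset_span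
      (Set.mem_insert_of_mem _ (Set.mem_insert_of_mem _ (Set.mem_insert _ _))))
    have mu1 : X (0,-1) - X (3,2) ∈ S := lV3 (Submodule.subset_span
      (Set.mem_insert_of_mem _ (Set.mem_insert_of_mem _ (Set.mem_insert_of_mem _
        (Set.mem_insert_of_mem _ rfl)))))
    have mum1 : X (0,1) - X (-3,-2) ∈ S := lV3 (Submodule.subset_span
      (Set.mem_insert_of_mem _ (Set.mem_insert_of_mem _ (Set.mem_insert_of_mem _
        (Set.mem_insert _ _)))))
    have mHα : Hα ∈ S := by
      have e : Hα = (3/4:ℂ) • f - (1/2:ℂ) • (Hα + (3:ℂ) • Hβ) := by rw [hf]; module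
      rw [e]; exact sub_mem (S.smul_mem _ mf) (S.smul_mem _ mu0)
    have mHβ : Hβ ∈ S := by
      have e : Hβ = (-(1/4):ℂ) • f + (1/2:ℂ) • (Hα + (3:ℂ) • Hβ) := by rw [hf]; module
      rw [e]; exact add_mem (S.smul_mem _ mf) (S.smul_mem _ mu0)
    have hc : ((2:ℂ) * (Real.sqrt 2:ℂ))⁻¹ * (Real.sqrt 2:ℂ) = 1/2 := by
      field_simp
    have mX0m1 : X (0,-1) ∈ S := by
      have e : X (0,-1) = ((2:ℂ) * (Real.sqrt 2:ℂ))⁻¹ • ep + (1/2:ℂ) • (X (0,-1) - X (3,2)) := by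
        rw [hep, smul_smul, hc]; module
      rw [e]; exact add_mem (S.smul_mem _ mep) (S.smul_mem _ mu1)
    have mX32 : X (3,2) ∈ S := by
      have e : X (3,2) = ((2:ℂ) * (Real.sqrt 2:ℂ))⁻¹ • ep - (1/2:ℂ) • (X (0,-1) - X (3,2)) := by
        rw [hep, smul_smul, hc]; module
      rw [e]; exact sub_mem (S.smul_mem _ mep) (S.smul_mem _ mu1)
    have mX01 : X (0,1) ∈ S := by
      have e : X (0,1) = ((2:ℂ) * (Real.sqrt 2:ℂ))⁻¹ • em + (1/2:ℂ) • (X (0,1) - X (-3,-2)) := by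
        rw [hem, smul_smul, hc]; module
      rw [e]; exact add_mem (S.smul_mem _ mem') (S.smul_mem _ mum1)
    have mXm3m2 : X (-3,-2) ∈ S := by
      have e : X (-3,-2) = ((2:ℂ) * (Real.sqrt 2:ℂ))⁻¹ • em - (1/2:ℂ) • (X (0,1) - X (-3,-2)) := by
        rw [hem, smul_smul, hc]; module
      rw [e]; exact sub_mem (S.smul_mem _ mem') (S.smul_mem _ mum1)
    have mv1 : X (1,0) ∈ S := lV1 (Submodule.subset_span (Set.mem_insert _ _))
    have mv0 : X (1,1) ∈ S :=
      lV1 (Submodule.subset_span (Set.mem_insert_of_mem _ (Set.mem_insert _ _)))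
    have mvm : X (-2,-1) ∈ S := lV1 (Submodule.subset_span
      (Set.mem_insert_of_mem _ (Set.mem_insert_of_mem _ rfl)))
    have mwm : X (-1,0) ∈ S := lV2 (Submodule.subset_span (Set.mem_insert _ _))
    have mw0 : X (-1,-1) ∈ S :=
      lV2 (Submodule.subset_span (Set.mem_insert_of_mem _ (Set.mem_insert _ _)))
    have mw1 : X (2,1) ∈ S := lV2 (Submodule.subset_span
      (Set.mem_insert_of_mem _ (Set.mem_insert_of_mem _ rfl)))
    have mu2 : X (3,1) ∈ S := lV3 (Submodule.subset_span (Set.mem_insert _ _))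
    have mum2 : X (-3,-1) ∈ S :=
      lV3 (Submodule.subset_span (Set.mem_insert_of_mem _ (Set.mem_insert _ _)))
    intro i
    fin_cases i
    · exact mHα
    · exact mHβ
    · exact mv1
    · exact mwm
    · exact mX01
    · exact mX0m1
    · exact mv0
    · exact mw0
    · exact mw1
    · exact mvm
    · exact mu2
    · exact mum2
    · exact mX32
    · exact mXm3m2
  have hsup : Submodule.span ℂ ({f, ep, em} : Set L) ⊔ V1four X ⊔ V2four X ⊔
      V3four Hα Hβ X = ⊤ := by
    rw [eq_top_iff, ← hG2.span_top]
    exact Submodule.span_le.mpr (by rintro x ⟨i, rfl⟩; exact hsub i)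
  have find1 : Module.finrank ℂ ↥(V1four X (L := L)) = 3 := by
    have hcomp : LinearIndependent ℂ (![X (1,0), X (1,1), X (-2,-1)] : Fin 3 → L) := by
      have h := hb14.comp (![3,4,5] : Fin 3 → Fin 14) (by decide)
      have e : b' ∘ (![3,4,5] : Fin 3 → Fin 14) = ![X (1,0), X (1,1), X (-2,-1)] := by
        funext i; fin_cases i <;> rfl
      rwa [e] at h
    have e : V1four X = Submodule.span ℂ (Set.range ![X (1,0), X (1,1), X (-2,-1)]) := by
      rw [V1four]; congr 1
      ext x; simp [Matrix.range_cons, Matrix.range_empty]; tauto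
    rw [e, finrank_span_eq_card hcomp]
    rfl
  have find2 : Module.finrank ℂ ↥(V2four X (L := L)) = 3 := by
    have hcomp : LinearIndependent ℂ (![X (-1,0), X (-1,-1), X (2,1)] : Fin 3 → L) := by
      have h := hb14.comp (![8,7,6] : Fin 3 → Fin 14) (by decide)
      have e : b' ∘ (![8,7,6] : Fin 3 → Fin 14) = ![X (-1,0), X (-1,-1), X (2,1)] := by
        funext i; fin_cases i <;> rfl
      rwa [e] at h
    have e : V2four X = Submodule.span ℂ (Set.range ![X (-1,0), X (-1,-1), X (2,1)]) := by
      rw [V2four]; congr 1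
      ext x; simp [Matrix.range_cons, Matrix.range_empty]; tauto
    rw [e, finrank_span_eq_card hcomp]
    rfl
  have find3 : Module.finrank ℂ ↥(V3four Hα Hβ X) = 5 := by
    have hcomp : LinearIndependent ℂ
        (![X (3,1), X (-3,-1), Hα + (3:ℂ) • Hβ, X (0,1) - X (-3,-2), X (0,-1) - X (3,2)] :
          Fin 5 → L) := by
      have h := hb14.comp (![9,13,11,12,10] : Fin 5 → Fin 14) (by decide)
      have e : b' ∘ (![9,13,11,12,10] : Fin 5 → Fin 14) =
          ![X (3,1), X (-3,-1), Hα + (3:ℂ) • Hβ, X (0,1) - X (-3,-2), X (0,-1) - X (3,2)] := by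
        funext i; fin_cases i <;> rfl
      rwa [e] at h
    have e : V3four Hα Hβ X = Submodule.span ℂ (Set.range
        ![X (3,1), X (-3,-1), Hα + (3:ℂ) • Hβ, X (0,1) - X (-3,-2), X (0,-1) - X (3,2)]) := by
      rw [V3four]; congr 1
      ext x; simp [Matrix.range_cons, Matrix.range_empty]; tauto
    rw [e, finrank_span_eq_card hcomp]
    rfl
  have irr1 : ∀ U : Submodule ℂ L, U ≤ V1four X →
      (∀ x ∈ Submodule.span ℂ ({f, ep, em} : Set L), ∀ u ∈ U, ⁅x, u⁆ ∈ U) →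
      U = ⊥ ∨ U = V1four X := by
    intro U hle hinv
    have hfU : ∀ y ∈ U, ⁅f, y⁆ ∈ U := fun y hy =>
      hinv f (Submodule.subset_span (Set.mem_insert _ _)) y hy
    have hepU : ∀ y ∈ U, ⁅ep, y⁆ ∈ U := fun y hy =>
      hinv ep (Submodule.subset_span (Set.mem_insert_of_mem _ (Set.mem_insert _ _))) y hy
    have hemU : ∀ y ∈ U, ⁅em, y⁆ ∈ U := fun y hy =>
      hinv em (Submodule.subset_span (Set.mem_insert_of_mem _ (Set.mem_insert_of_mem _ rfl))) y hy
    by_cases hbot : U = ⊥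
    · exact Or.inl hbot
    right
    obtain ⟨u, huU, hune⟩ := (Submodule.ne_bot_iff U).mp hbot
    have huV := hle huU
    rw [V1four, Submodule.mem_span_insert] at huV
    obtain ⟨a, y1, hy1, rfl⟩ := huV
    rw [Submodule.mem_span_insert] at hy1
    obtain ⟨b, y2, hy2, rfl⟩ := hy1
    rw [Submodule.mem_span_singleton] at hy2
    obtain ⟨c, rfl⟩ := hy2
    have hD1 : ⁅f, a • X (1,0) + (b • X (1,1) + c • X (-2,-1))⁆ =
        (2*a) • X (1,0) + (-2*c) • X (-2,-1) := by
      simp only [lie_add, lie_smul, cf_v1, cf_v0, cf_vm]; module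
    have hD2 : ⁅f, (2*a) • X (1,0) + (-2*c) • X (-2,-1)⁆ =
        (4*a) • X (1,0) + (4*c) • X (-2,-1) := by
      simp only [lie_add, lie_smul, cf_v1, cf_vm]; module
    have k1 := hfU _ huU
    rw [hD1] at k1
    have k2 := hfU _ k1
    rw [hD2] at k2
    have ma : a • X (1,0) ∈ U := by
      refine smul_mem_cancel (show (8:ℂ) ≠ 0 by norm_num) ?_
      have e : (8:ℂ) • (a • X (1,0)) =
          ((4*a) • X (1,0) + (4*c) • X (-2,-1)) +
          (2:ℂ) • ((2*a) • X (1,0) + (-2*c) • X (-2,-1)) := by module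
      rw [e]; exact add_mem k2 (U.smul_mem _ k1)
    have mc : c • X (-2,-1) ∈ U := by
      refine smul_mem_cancel (show (8:ℂ) ≠ 0 by norm_num) ?_
      have e : (8:ℂ) • (c • X (-2,-1)) =
          ((4*a) • X (1,0) + (4*c) • X (-2,-1)) -
          (2:ℂ) • ((2*a) • X (1,0) + (-2*c) • X (-2,-1)) := by module
      rw [e]; exact sub_mem k2 (U.smul_mem _ k1)
    have mb : b • X (1,1) ∈ U := by
      have e : b • X (1,1) = (a • X (1,0) + (b • X (1,1) + c • X (-2,-1))) -
          a • X (1,0) - c • X (-2,-1) := by module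
      rw [e]; exact sub_mem (sub_mem huU ma) mc
    have st1 : X (1,0) ∈ U → X (1,1) ∈ U := by
      intro h; have h2 := hemU _ h; rw [cem_v1] at h2; exact smul_mem_cancel hs h2
    have st2 : X (1,1) ∈ U → X (-2,-1) ∈ U := by
      intro h; have h2 := hemU _ h; rw [cem_v0] at h2; exact smul_mem_cancel hs h2
    have st3 : X (1,1) ∈ U → X (1,0) ∈ U := by
      intro h; have h2 := hepU _ h; rw [cep_v0] at h2; exact smul_mem_cancel hs h2
    have st4 : X (-2,-1) ∈ U → X (1,1) ∈ U := by
      intro h; have h2 := hepU _ h; rw [cep_vm] at h2; exact smul_mem_cancel hs h2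
    have hall : X (1,0) ∈ U → X (1,1) ∈ U → X (-2,-1) ∈ U → U = V1four X := by
      intro h1 h2 h3
      refine le_antisymm hle ?_
      rw [V1four]
      refine Submodule.span_le.mpr ?_
      rintro x (rfl | rfl | rfl)
      · exact h1
      · exact h2
      · exact h3
    by_cases ha : a = 0
    · by_cases hb : b = 0
      · by_cases hc : c = 0
        · exact absurd (by rw [ha, hb, hc]; simp) hune
        · have h3 : X (-2,-1) ∈ U := smul_mem_cancel hc mc
          have h2 := st4 h3
          exact hall (st3 h2) h2 h3
      · have h2 : X (1,1) ∈ U := smul_mem_cancel hb mb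
        exact hall (st3 h2) h2 (st2 h2)
    · have h1 : X (1,0) ∈ U := smul_mem_cancel ha ma
      have h2 := st1 h1
      exact hall h1 h2 (st2 h2)

  have irr2 : ∀ U : Submodule ℂ L, U ≤ V2four X →
      (∀ x ∈ Submodule.span ℂ ({f, ep, em} : Set L), ∀ u ∈ U, ⁅x, u⁆ ∈ U) →
      U = ⊥ ∨ U = V2four X := by
    intro U hle hinv
    have hfU : ∀ y ∈ U, ⁅f, y⁆ ∈ U := fun y hy =>
      hinv f (Submodule.subset_span (Set.mem_insert _ _)) y hy
    have hepU : ∀ y ∈ U, ⁅ep, y⁆ ∈ U := fun y hy =>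
      hinv ep (Submodule.subset_span (Set.mem_insert_of_mem _ (Set.mem_insert _ _))) y hy
    have hemU : ∀ y ∈ U, ⁅em, y⁆ ∈ U := fun y hy =>
      hinv em (Submodule.subset_span (Set.mem_insert_of_mem _ (Set.mem_insert_of_mem _ rfl))) y hy
    by_cases hbot : U = ⊥
    · exact Or.inl hbot
    right
    obtain ⟨u, huU, hune⟩ := (Submodule.ne_bot_iff U).mp hbot
    have huV := hle huU
    rw [V2four, Submodule.mem_span_insert] at huV
    obtain ⟨a, y1, hy1, rfl⟩ := huV
    rw [Submodule.mem_span_insert] at hy1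
    obtain ⟨b, y2, hy2, rfl⟩ := hy1
    rw [Submodule.mem_span_singleton] at hy2
    obtain ⟨c, rfl⟩ := hy2
    have hD1 : ⁅f, a • X (-1,0) + (b • X (-1,-1) + c • X (2,1))⁆ =
        (-2*a) • X (-1,0) + (2*c) • X (2,1) := by
      simp only [lie_add, lie_smul, cf_wm, cf_w0, cf_w1]; module
    have hD2 : ⁅f, (-2*a) • X (-1,0) + (2*c) • X (2,1)⁆ =
        (4*a) • X (-1,0) + (4*c) • X (2,1) := by
      simp only [lie_add, lie_smul, cf_wm, cf_w1]; module
    have k1 := hfU _ huU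
    rw [hD1] at k1
    have k2 := hfU _ k1
    rw [hD2] at k2
    have ma : a • X (-1,0) ∈ U := by
      refine smul_mem_cancel (show (8:ℂ) ≠ 0 by norm_num) ?_
      have e : (8:ℂ) • (a • X (-1,0)) =
          ((4*a) • X (-1,0) + (4*c) • X (2,1)) -
          (2:ℂ) • ((-2*a) • X (-1,0) + (2*c) • X (2,1)) := by module
      rw [e]; exact sub_mem k2 (U.smul_mem _ k1)
    have mc : c • X (2,1) ∈ U := by
      refine smul_mem_cancel (show (8:ℂ) ≠ 0 by norm_num) ?_
      have e : (8:ℂ) • (c • X (2,1)) =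
          ((4*a) • X (-1,0) + (4*c) • X (2,1)) +
          (2:ℂ) • ((-2*a) • X (-1,0) + (2*c) • X (2,1)) := by module
      rw [e]; exact add_mem k2 (U.smul_mem _ k1)
    have mb : b • X (-1,-1) ∈ U := by
      have e : b • X (-1,-1) = (a • X (-1,0) + (b • X (-1,-1) + c • X (2,1))) -
          a • X (-1,0) - c • X (2,1) := by module
      rw [e]; exact sub_mem (sub_mem huU ma) mc
    have st1 : X (2,1) ∈ U → X (-1,-1) ∈ U := by
      intro h; have h2 := hemU _ h; rw [cem_w1] at h2
      exact smul_mem_cancel (neg_ne_zero.mpr hs) h2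
    have st2 : X (-1,-1) ∈ U → X (-1,0) ∈ U := by
      intro h; have h2 := hemU _ h; rw [cem_w0] at h2
      exact smul_mem_cancel (neg_ne_zero.mpr hs) h2
    have st3 : X (-1,-1) ∈ U → X (2,1) ∈ U := by
      intro h; have h2 := hepU _ h; rw [cep_w0] at h2
      exact smul_mem_cancel (neg_ne_zero.mpr hs) h2
    have st4 : X (-1,0) ∈ U → X (-1,-1) ∈ U := by
      intro h; have h2 := hepU _ h; rw [cep_wm] at h2
      exact smul_mem_cancel (neg_ne_zero.mpr hs) h2
    have hall : X (-1,0) ∈ U → X (-1,-1) ∈ U → X (2,1) ∈ U → U = V2four X := by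
      intro h1 h2 h3
      refine le_antisymm hle ?_
      rw [V2four]
      refine Submodule.span_le.mpr ?_
      rintro x (rfl | rfl | rfl)
      · exact h1
      · exact h2
      · exact h3
    by_cases ha : a = 0
    · by_cases hb : b = 0
      · by_cases hc : c = 0
        · exact absurd (by rw [ha, hb, hc]; simp) hune
        · have h3 : X (2,1) ∈ U := smul_mem_cancel hc mc
          have h2 := st1 h3
          exact hall (st2 h2) h2 h3
      · have h2 : X (-1,-1) ∈ U := smul_mem_cancel hb mb
        exact hall (st2 h2) h2 (st3 h2)
    · have h1 : X (-1,0) ∈ U := smul_mem_cancel ha ma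
      have h2 := st4 h1
      exact hall h1 h2 (st3 h2)
  have irr3 : ∀ U : Submodule ℂ L, U ≤ V3four Hα Hβ X →
      (∀ x ∈ Submodule.span ℂ ({f, ep, em} : Set L), ∀ u ∈ U, ⁅x, u⁆ ∈ U) →
      U = ⊥ ∨ U = V3four Hα Hβ X := by
    intro U hle hinv
    have hfU : ∀ y ∈ U, ⁅f, y⁆ ∈ U := fun y hy =>
      hinv f (Submodule.subset_span (Set.mem_insert _ _)) y hy
    have hepU : ∀ y ∈ U, ⁅ep, y⁆ ∈ U := fun y hy =>
      hinv ep (Submodule.subset_span (Set.mem_insert_of_mem _ (Set.mem_insert _ _))) y hy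
    have hemU : ∀ y ∈ U, ⁅em, y⁆ ∈ U := fun y hy =>
      hinv em (Submodule.subset_span (Set.mem_insert_of_mem _ (Set.mem_insert_of_mem _ rfl))) y hy
    by_cases hbot : U = ⊥
    · exact Or.inl hbot
    right
    obtain ⟨u, huU, hune⟩ := (Submodule.ne_bot_iff U).mp hbot
    have huV := hle huU
    rw [V3four, Submodule.mem_span_insert] at huV
    obtain ⟨a, y1, hy1, rfl⟩ := huV
    rw [Submodule.mem_span_insert] at hy1
    obtain ⟨b, y2, hy2, rfl⟩ := hy1
    rw [Submodule.mem_span_insert] at hy2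
    obtain ⟨c, y3, hy3, rfl⟩ := hy2
    rw [Submodule.mem_span_insert] at hy3
    obtain ⟨d, y4, hy4, rfl⟩ := hy3
    rw [Submodule.mem_span_singleton] at hy4
    obtain ⟨e, rfl⟩ := hy4
    have hD1 : ⁅f, a • X (3,1) + (b • X (-3,-1) + (c • (Hα + (3:ℂ) • Hβ) +
        (d • (X (0,1) - X (-3,-2)) + e • (X (0,-1) - X (3,2)))))⁆ =
        (4*a) • X (3,1) + ((-4)*b) • X (-3,-1) + ((-2)*d) • (X (0,1) - X (-3,-2)) +
        (2*e) • (X (0,-1) - X (3,2)) := by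
      simp only [lie_add, lie_smul, cf_u2, cf_um2, cf_u0, cf_um1, cf_u1]; module
    have hD2 : ⁅f, (4*a) • X (3,1) + ((-4)*b) • X (-3,-1) + ((-2)*d) • (X (0,1) - X (-3,-2)) +
        (2*e) • (X (0,-1) - X (3,2))⁆ =
        (16*a) • X (3,1) + (16*b) • X (-3,-1) + (4*d) • (X (0,1) - X (-3,-2)) +
        (4*e) • (X (0,-1) - X (3,2)) := by
      simp only [lie_add, lie_smul, cf_u2, cf_um2, cf_um1, cf_u1]; module
    have hD3 : ⁅f, (16*a) • X (3,1) + (16*b) • X (-3,-1) + (4*d) • (X (0,1) - X (-3,-2)) +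
        (4*e) • (X (0,-1) - X (3,2))⁆ =
        (64*a) • X (3,1) + ((-64)*b) • X (-3,-1) + ((-8)*d) • (X (0,1) - X (-3,-2)) +
        (8*e) • (X (0,-1) - X (3,2)) := by
      simp only [lie_add, lie_smul, cf_u2, cf_um2, cf_um1, cf_u1]; module
    have hD4 : ⁅f, (64*a) • X (3,1) + ((-64)*b) • X (-3,-1) + ((-8)*d) • (X (0,1) - X (-3,-2)) +
        (8*e) • (X (0,-1) - X (3,2))⁆ =
        (256*a) • X (3,1) + (256*b) • X (-3,-1) + (16*d) • (X (0,1) - X (-3,-2)) +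
        (16*e) • (X (0,-1) - X (3,2)) := by
      simp only [lie_add, lie_smul, cf_u2, cf_um2, cf_um1, cf_u1]; module
    have k1 := hfU _ huU
    rw [hD1] at k1
    have k2 := hfU _ k1
    rw [hD2] at k2
    have k3 := hfU _ k2
    rw [hD3] at k3
    have k4 := hfU _ k3
    rw [hD4] at k4
    set D1 := (4*a) • X (3,1) + ((-4)*b) • X (-3,-1) + ((-2)*d) • (X (0,1) - X (-3,-2)) +
        (2*e) • (X (0,-1) - X (3,2)) with hD1e
    set D2 := (16*a) • X (3,1) + (16*b) • X (-3,-1) + (4*d) • (X (0,1) - X (-3,-2)) +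
        (4*e) • (X (0,-1) - X (3,2)) with hD2e
    set D3 := (64*a) • X (3,1) + ((-64)*b) • X (-3,-1) + ((-8)*d) • (X (0,1) - X (-3,-2)) +
        (8*e) • (X (0,-1) - X (3,2)) with hD3e
    set D4 := (256*a) • X (3,1) + (256*b) • X (-3,-1) + (16*d) • (X (0,1) - X (-3,-2)) +
        (16*e) • (X (0,-1) - X (3,2)) with hD4e
    have ma : a • X (3,1) ∈ U := by
      refine smul_mem_cancel (show (384:ℂ) ≠ 0 by norm_num) ?_
      have ee : (384:ℂ) • (a • X (3,1)) = D4 + (4:ℂ) • D3 - (4:ℂ) • D2 - (16:ℂ) • D1 := by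
        rw [hD1e, hD2e, hD3e, hD4e]; module
      rw [ee]
      exact sub_mem (sub_mem (add_mem k4 (U.smul_mem _ k3)) (U.smul_mem _ k2)) (U.smul_mem _ k1)
    have mb : b • X (-3,-1) ∈ U := by
      refine smul_mem_cancel (show (384:ℂ) ≠ 0 by norm_num) ?_
      have ee : (384:ℂ) • (b • X (-3,-1)) = D4 - (4:ℂ) • D3 - (4:ℂ) • D2 + (16:ℂ) • D1 := by
        rw [hD1e, hD2e, hD3e, hD4e]; module
      rw [ee]
      exact add_mem (sub_mem (sub_mem k4 (U.smul_mem _ k3)) (U.smul_mem _ k2)) (U.smul_mem _ k1)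
    have me : e • (X (0,-1) - X (3,2)) ∈ U := by
      refine smul_mem_cancel (show (-96:ℂ) ≠ 0 by norm_num) ?_
      have ee : (-96:ℂ) • (e • (X (0,-1) - X (3,2))) =
          D4 + (2:ℂ) • D3 - (16:ℂ) • D2 - (32:ℂ) • D1 := by
        rw [hD1e, hD2e, hD3e, hD4e]; module
      rw [ee]
      exact sub_mem (sub_mem (add_mem k4 (U.smul_mem _ k3)) (U.smul_mem _ k2)) (U.smul_mem _ k1)
    have md : d • (X (0,1) - X (-3,-2)) ∈ U := by
      refine smul_mem_cancel (show (-96:ℂ) ≠ 0 by norm_num) ?_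
      have ee : (-96:ℂ) • (d • (X (0,1) - X (-3,-2))) =
          D4 - (2:ℂ) • D3 - (16:ℂ) • D2 + (32:ℂ) • D1 := by
        rw [hD1e, hD2e, hD3e, hD4e]; module
      rw [ee]
      exact add_mem (sub_mem (sub_mem k4 (U.smul_mem _ k3)) (U.smul_mem _ k2)) (U.smul_mem _ k1)
    have mc : c • (Hα + (3:ℂ) • Hβ) ∈ U := by
      have ee : c • (Hα + (3:ℂ) • Hβ) =
          (a • X (3,1) + (b • X (-3,-1) + (c • (Hα + (3:ℂ) • Hβ) +
            (d • (X (0,1) - X (-3,-2)) + e • (X (0,-1) - X (3,2)))))) -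
          a • X (3,1) - b • X (-3,-1) - d • (X (0,1) - X (-3,-2)) -
          e • (X (0,-1) - X (3,2)) := by module
      rw [ee]
      exact sub_mem (sub_mem (sub_mem (sub_mem huU ma) mb) md) me
    -- ladder steps
    have sA : X (3,1) ∈ U → X (0,-1) - X (3,2) ∈ U := by
      intro h; have h2 := hemU _ h; rw [cem_u2] at h2
      exact smul_mem_cancel (neg_ne_zero.mpr hs) h2
    have sB : X (0,-1) - X (3,2) ∈ U → Hα + (3:ℂ) • Hβ ∈ U := by
      intro h; have h2 := hemU _ h; rw [cem_u1] at h2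
      exact smul_mem_cancel hs h2
    have sC : Hα + (3:ℂ) • Hβ ∈ U → X (0,1) - X (-3,-2) ∈ U := by
      intro h; have h2 := hemU _ h; rw [cem_u0] at h2
      exact smul_mem_cancel (mul_ne_zero (by norm_num) hs) h2
    have sD : X (0,1) - X (-3,-2) ∈ U → X (-3,-1) ∈ U := by
      intro h; have h2 := hemU _ h; rw [cem_um1] at h2
      exact smul_mem_cancel (mul_ne_zero (by norm_num) hs) h2
    have sE : X (-3,-1) ∈ U → X (0,1) - X (-3,-2) ∈ U := by
      intro h; have h2 := hepU _ h; rw [cep_um2] at h2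
      exact smul_mem_cancel hs h2
    have sF : X (0,1) - X (-3,-2) ∈ U → Hα + (3:ℂ) • Hβ ∈ U := by
      intro h; have h2 := hepU _ h; rw [cep_um1] at h2
      exact smul_mem_cancel (neg_ne_zero.mpr hs) h2
    have sG : Hα + (3:ℂ) • Hβ ∈ U → X (0,-1) - X (3,2) ∈ U := by
      intro h; have h2 := hepU _ h; rw [cep_u0] at h2
      exact smul_mem_cancel (mul_ne_zero (by norm_num) hs) h2
    have sH : X (0,-1) - X (3,2) ∈ U → X (3,1) ∈ U := by
      intro h; have h2 := hepU _ h; rw [cep_u1] at h2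
      exact smul_mem_cancel (mul_ne_zero (by norm_num) hs) h2
    have hall : X (3,1) ∈ U → X (-3,-1) ∈ U → Hα + (3:ℂ) • Hβ ∈ U →
        X (0,1) - X (-3,-2) ∈ U → X (0,-1) - X (3,2) ∈ U → U = V3four Hα Hβ X := by
      intro h1 h2 h3 h4 h5
      refine le_antisymm hle ?_
      rw [V3four]
      refine Submodule.span_le.mpr ?_
      rintro x (rfl | rfl | rfl | rfl | rfl)
      · exact h1
      · exact h2
      · exact h3
      · exact h4
      · exact h5
    by_cases hA : a = 0
    · by_cases hB : b = 0
      · by_cases hC : c = 0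
        · by_cases hD : d = 0
          · by_cases hE : e = 0
            · exact absurd (by rw [hA, hB, hC, hD, hE]; simp) hune
            · have h5 := smul_mem_cancel hE me
              have h1 := sH h5
              have h3 := sB h5
              have h4 := sC h3
              exact hall h1 (sD h4) h3 h4 h5
          · have h4 := smul_mem_cancel hD md
            have h3 := sF h4
            have h5 := sG h3
            exact hall (sH h5) (sD h4) h3 h4 h5
        · have h3 := smul_mem_cancel hC mc
          have h5 := sG h3
          have h4 := sC h3
          exact hall (sH h5) (sD h4) h3 h4 h5
      · have h2 := smul_mem_cancel hB mb
        have h4 := sE h2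
        have h3 := sF h4
        have h5 := sG h3
        exact hall (sH h5) h2 h3 h4 h5
    · have h1 := smul_mem_cancel hA ma
      have h5 := sA h1
      have h3 := sB h5
      have h4 := sC h3
      exact hall h1 (sD h4) h3 h4 h5

  exact ⟨inv1, inv2, inv3, find1, find2, find3, irr1, irr2, irr3, hsup, hdisjA,
    hdisj1, hdisj2, hdisj3⟩

end G2Formal
end

section
/- The normalizer of the one-dimensional subalgebra ℂ(X_α+X_β) in G₂, i.e. {y∈G₂ : [y, ℂ(X_α+X_β)] ⊆ ℂ(X_α+X_β)}, equals ℂ(3H_α+5H_β) ⊕ ℂ(X_α+X_β) ⊕ ℂX_{3α+2β}; in particular this normalizer has dimension 3. -/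
namespace G2Formal

variable {L : Type*} [LieRing L] [LieAlgebra ℂ L]

private theorem mem_Phi_iff (p : ℤ × ℤ) :
    p ∈ Phi ↔ (p = (1,0) ∨ p = (0,1) ∨ p = (1,1) ∨ p = (2,1) ∨ p = (3,1) ∨ p = (3,2) ∨
      p = (-1,0) ∨ p = (0,-1) ∨ p = (-1,-1) ∨ p = (-2,-1) ∨ p = (-3,-1) ∨ p = (-3,-2)) :=
  Iff.rfl

private theorem sum14_aux {M : Type*} [AddCommMonoid M] (f : Fin 14 → M) :
    ∑ i, f i = f 0 + f 1 + f 2 + f 3 + f 4 + f 5 + f 6 + f 7 + f 8 + f 9 + f 10 + f 11 +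
      f 12 + f 13 := by
  simp [Fin.sum_univ_succ, add_assoc]

set_option maxHeartbeats 4000000 in
set_option maxRecDepth 8000 in
/-- **Theorem.**  (An entry of Table 4 of the paper.)  The normalizer of the one-dimensional
subalgebra `ℂ(X_α + X_β)` in `G₂` equals
`ℂ(3H_α + 5H_β) ⊕ ℂ(X_α + X_β) ⊕ ℂX_{3α+2β}` (where `3H_α + 5H_β = 7·H_{9α+5β}`);
in particular this normalizer has dimension `3`. -/
theorem normalizer_of_Xalpha_plus_Xbeta
    {L : Type*} [LieRing L] [LieAlgebra ℂ L] (Hα Hβ : L) (X : ℤ × ℤ → L)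
    (hG2 : IsG2 Hα Hβ X) :
    (∀ y : L,
      (∀ z ∈ Submodule.span ℂ ({X (1,0) + X (0,1)} : Set L),
        ⁅y, z⁆ ∈ Submodule.span ℂ ({X (1,0) + X (0,1)} : Set L)) ↔
      y ∈ Submodule.span ℂ
        ({(3:ℂ) • Hα + (5:ℂ) • Hβ, X (1,0) + X (0,1), X (3,2)} : Set L)) ∧
    Module.finrank ℂ
      ↥(Submodule.span ℂ
        ({(3:ℂ) • Hα + (5:ℂ) • Hβ, X (1,0) + X (0,1), X (3,2)} : Set L)) = 3 := by
  obtain ⟨hind, hspan, -, hhx, hxnx, hxx, hxxz⟩ := hG2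
  -- Hr evaluations
  have hr10 : Hr Hα Hβ (1,0) = Hα := by norm_num [Hr, ip]
  have hrm10 : Hr Hα Hβ (-1,0) = -Hα := by norm_num [Hr, ip]
  have hr01 : Hr Hα Hβ (0,1) = Hβ := by norm_num [Hr, ip]
  have hrm01 : Hr Hα Hβ (0,-1) = -Hβ := by norm_num [Hr, ip]
  -- Cartan brackets
  have hA1 : ⁅Hα, X (1,0)⁆ = (2:ℂ) • X (1,0) := by
    have h := hhx (1,0) (by simp only [mem_Phi_iff]; decide) (1,0) (by simp only [mem_Phi_iff]; decide)
    rw [hr10] at h; rw [h]; norm_num [cart, ip]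
  have hA2 : ⁅Hα, X (0,1)⁆ = (-3:ℂ) • X (0,1) := by
    have h := hhx (1,0) (by simp only [mem_Phi_iff]; decide) (0,1) (by simp only [mem_Phi_iff]; decide)
    rw [hr10] at h; rw [h]; norm_num [cart, ip]
  have hB1 : ⁅Hβ, X (1,0)⁆ = (-1:ℂ) • X (1,0) := by
    have h := hhx (0,1) (by simp only [mem_Phi_iff]; decide) (1,0) (by simp only [mem_Phi_iff]; decide)
    rw [hr01] at h; rw [h]; norm_num [cart, ip]
  have hB2 : ⁅Hβ, X (0,1)⁆ = (2:ℂ) • X (0,1) := by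
    have h := hhx (0,1) (by simp only [mem_Phi_iff]; decide) (0,1) (by simp only [mem_Phi_iff]; decide)
    rw [hr01] at h; rw [h]; norm_num [cart, ip]
  -- root-vector brackets with X (1,0) and X (0,1)
  have b2a : ⁅X (1,0), X (1,0)⁆ = 0 := lie_self _
  have b2b : ⁅X (1,0), X (0,1)⁆ = (-1:ℂ) • X (1,1) := by
    have h := hxx (1,0) (by simp only [mem_Phi_iff]; decide) (0,1) (by simp only [mem_Phi_iff]; decide) (by simp only [mem_Phi_iff]; decide)
    rw [show ((1,0)+(0,1) : ℤ×ℤ) = (1,1) by decide,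
      show Nc (1,0) (0,1) = -1 by decide] at h
    rw [h]; norm_num
  have b3a : ⁅X (-1,0), X (1,0)⁆ = -Hα := by
    have h := hxnx (-1,0) (by simp only [mem_Phi_iff]; decide)
    rw [show (-((-1,0) : ℤ×ℤ)) = (1,0) by decide] at h
    rw [h, hrm10]
  have b3b : ⁅X (-1,0), X (0,1)⁆ = 0 :=
    hxxz (-1,0) (by simp only [mem_Phi_iff]; decide) (0,1) (by simp only [mem_Phi_iff]; decide) (by decide) (by simp only [mem_Phi_iff]; decide)
  have b4a : ⁅X (0,1), X (1,0)⁆ = (1:ℂ) • X (1,1) := by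
    have h := hxx (0,1) (by simp only [mem_Phi_iff]; decide) (1,0) (by simp only [mem_Phi_iff]; decide) (by simp only [mem_Phi_iff]; decide)
    rw [show ((0,1)+(1,0) : ℤ×ℤ) = (1,1) by decide,
      show Nc (0,1) (1,0) = 1 by decide] at h
    rw [h]; norm_num
  have b4b : ⁅X (0,1), X (0,1)⁆ = 0 := lie_self _
  have b5a : ⁅X (0,-1), X (1,0)⁆ = 0 :=
    hxxz (0,-1) (by simp only [mem_Phi_iff]; decide) (1,0) (by simp only [mem_Phi_iff]; decide) (by decide) (by simp only [mem_Phi_iff]; decide)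
  have b5b : ⁅X (0,-1), X (0,1)⁆ = -Hβ := by
    have h := hxnx (0,-1) (by simp only [mem_Phi_iff]; decide)
    rw [show (-((0,-1) : ℤ×ℤ)) = (0,1) by decide] at h
    rw [h, hrm01]
  have b6a : ⁅X (1,1), X (1,0)⁆ = (2:ℂ) • X (2,1) := by
    have h := hxx (1,1) (by simp only [mem_Phi_iff]; decide) (1,0) (by simp only [mem_Phi_iff]; decide) (by simp only [mem_Phi_iff]; decide)
    rw [show ((1,1)+(1,0) : ℤ×ℤ) = (2,1) by decide,
      show Nc (1,1) (1,0) = 2 by decide] at h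
    rw [h]; norm_num
  have b6b : ⁅X (1,1), X (0,1)⁆ = 0 :=
    hxxz (1,1) (by simp only [mem_Phi_iff]; decide) (0,1) (by simp only [mem_Phi_iff]; decide) (by decide) (by simp only [mem_Phi_iff]; decide)
  have b7a : ⁅X (-1,-1), X (1,0)⁆ = (-3:ℂ) • X (0,-1) := by
    have h := hxx (-1,-1) (by simp only [mem_Phi_iff]; decide) (1,0) (by simp only [mem_Phi_iff]; decide) (by simp only [mem_Phi_iff]; decide)
    rw [show ((-1,-1)+(1,0) : ℤ×ℤ) = (0,-1) by decide,
      show Nc (-1,-1) (1,0) = -3 by decide] at h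
    rw [h]; norm_num
  have b7b : ⁅X (-1,-1), X (0,1)⁆ = (1:ℂ) • X (-1,0) := by
    have h := hxx (-1,-1) (by simp only [mem_Phi_iff]; decide) (0,1) (by simp only [mem_Phi_iff]; decide) (by simp only [mem_Phi_iff]; decide)
    rw [show ((-1,-1)+(0,1) : ℤ×ℤ) = (-1,0) by decide,
      show Nc (-1,-1) (0,1) = 1 by decide] at h
    rw [h]; norm_num
  have b8a : ⁅X (2,1), X (1,0)⁆ = (-3:ℂ) • X (3,1) := by
    have h := hxx (2,1) (by simp only [mem_Phi_iff]; decide) (1,0) (by simp only [mem_Phi_iff]; decide) (by simp only [mem_Phi_iff]; decide)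
    rw [show ((2,1)+(1,0) : ℤ×ℤ) = (3,1) by decide,
      show Nc (2,1) (1,0) = -3 by decide] at h
    rw [h]; norm_num
  have b8b : ⁅X (2,1), X (0,1)⁆ = 0 :=
    hxxz (2,1) (by simp only [mem_Phi_iff]; decide) (0,1) (by simp only [mem_Phi_iff]; decide) (by decide) (by simp only [mem_Phi_iff]; decide)
  have b9a : ⁅X (-2,-1), X (1,0)⁆ = (-2:ℂ) • X (-1,-1) := by
    have h := hxx (-2,-1) (by simp only [mem_Phi_iff]; decide) (1,0) (by simp only [mem_Phi_iff]; decide) (by simp only [mem_Phi_iff]; decide)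
    rw [show ((-2,-1)+(1,0) : ℤ×ℤ) = (-1,-1) by decide,
      show Nc (-2,-1) (1,0) = -2 by decide] at h
    rw [h]; norm_num
  have b9b : ⁅X (-2,-1), X (0,1)⁆ = 0 :=
    hxxz (-2,-1) (by simp only [mem_Phi_iff]; decide) (0,1) (by simp only [mem_Phi_iff]; decide) (by decide) (by simp only [mem_Phi_iff]; decide)
  have b10a : ⁅X (3,1), X (1,0)⁆ = 0 :=
    hxxz (3,1) (by simp only [mem_Phi_iff]; decide) (1,0) (by simp only [mem_Phi_iff]; decide) (by decide) (by simp only [mem_Phi_iff]; decide)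
  have b10b : ⁅X (3,1), X (0,1)⁆ = (-1:ℂ) • X (3,2) := by
    have h := hxx (3,1) (by simp only [mem_Phi_iff]; decide) (0,1) (by simp only [mem_Phi_iff]; decide) (by simp only [mem_Phi_iff]; decide)
    rw [show ((3,1)+(0,1) : ℤ×ℤ) = (3,2) by decide,
      show Nc (3,1) (0,1) = -1 by decide] at h
    rw [h]; norm_num
  have b11a : ⁅X (-3,-1), X (1,0)⁆ = (1:ℂ) • X (-2,-1) := by
    have h := hxx (-3,-1) (by simp only [mem_Phi_iff]; decide) (1,0) (by simp only [mem_Phi_iff]; decide) (by simp only [mem_Phi_iff]; decide)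
    rw [show ((-3,-1)+(1,0) : ℤ×ℤ) = (-2,-1) by decide,
      show Nc (-3,-1) (1,0) = 1 by decide] at h
    rw [h]; norm_num
  have b11b : ⁅X (-3,-1), X (0,1)⁆ = 0 :=
    hxxz (-3,-1) (by simp only [mem_Phi_iff]; decide) (0,1) (by simp only [mem_Phi_iff]; decide) (by decide) (by simp only [mem_Phi_iff]; decide)
  have b12a : ⁅X (3,2), X (1,0)⁆ = 0 :=
    hxxz (3,2) (by simp only [mem_Phi_iff]; decide) (1,0) (by simp only [mem_Phi_iff]; decide) (by decide) (by simp only [mem_Phi_iff]; decide)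
  have b12b : ⁅X (3,2), X (0,1)⁆ = 0 :=
    hxxz (3,2) (by simp only [mem_Phi_iff]; decide) (0,1) (by simp only [mem_Phi_iff]; decide) (by decide) (by simp only [mem_Phi_iff]; decide)
  have b13a : ⁅X (-3,-2), X (1,0)⁆ = 0 :=
    hxxz (-3,-2) (by simp only [mem_Phi_iff]; decide) (1,0) (by simp only [mem_Phi_iff]; decide) (by decide) (by simp only [mem_Phi_iff]; decide)
  have b13b : ⁅X (-3,-2), X (0,1)⁆ = (1:ℂ) • X (-3,-1) := by
    have h := hxx (-3,-2) (by simp only [mem_Phi_iff]; decide) (0,1) (by simp only [mem_Phi_iff]; decide) (by simp only [mem_Phi_iff]; decide)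
    rw [show ((-3,-2)+(0,1) : ℤ×ℤ) = (-3,-1) by decide,
      show Nc (-3,-2) (0,1) = 1 by decide] at h
    rw [h]; norm_num
  constructor
  · intro y
    constructor
    · -- forward direction
      intro h
      obtain ⟨c, hy⟩ : ∃ c : Fin 14 → ℂ, ∑ i, c i • chev Hα Hβ X i = y :=
        ⟨(Module.Basis.mk hind hspan.ge).repr y, by
          simpa only [Module.Basis.coe_mk] using (Module.Basis.mk hind hspan.ge).sum_repr y⟩
      obtain ⟨t, ht⟩ := Submodule.mem_span_singleton.mp
        (h _ (Submodule.mem_span_singleton_self _))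
      have hy2 : y = c 0 • Hα + c 1 • Hβ + c 2 • X (1,0) + c 3 • X (-1,0) + c 4 • X (0,1) +
          c 5 • X (0,-1) + c 6 • X (1,1) + c 7 • X (-1,-1) + c 8 • X (2,1) +
          c 9 • X (-2,-1) + c 10 • X (3,1) + c 11 • X (-3,-1) + c 12 • X (3,2) +
          c 13 • X (-3,-2) := by
        rw [← hy, sum14_aux]; rfl
      have hyv : ⁅y, X (1,0) + X (0,1)⁆ =
          (-(c 3)) • Hα + (-(c 5)) • Hβ + (2 * c 0 - c 1) • X (1,0) + (c 7) • X (-1,0) +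
          (-3 * c 0 + 2 * c 1) • X (0,1) + (-3 * c 7) • X (0,-1) + (c 4 - c 2) • X (1,1) +
          (-2 * c 9) • X (-1,-1) + (2 * c 6) • X (2,1) + (c 11) • X (-2,-1) +
          (-3 * c 8) • X (3,1) + (c 13) • X (-3,-1) + (-(c 10)) • X (3,2) := by
        rw [hy2]
        simp only [add_lie, smul_lie, lie_add, hA1, hA2, hB1, hB2, b2a, b2b, b3a, b3b,
          b4a, b4b, b5a, b5b, b6a, b6b, b7a, b7b, b8a, b8b, b9a, b9b, b10a, b10b,
          b11a, b11b, b12a, b12b, b13a, b13b]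
        module
      have heq := ht.trans hyv
      have key : ∑ i, (![-(c 3), -(c 5), 2 * c 0 - c 1 - t, c 7, -3 * c 0 + 2 * c 1 - t,
          -3 * c 7, c 4 - c 2, -2 * c 9, 2 * c 6, c 11, -3 * c 8, c 13, -(c 10), 0] :
          Fin 14 → ℂ) i • chev Hα Hβ X i = 0 := by
        rw [sum14_aux]
        show (-(c 3)) • Hα + (-(c 5)) • Hβ + (2 * c 0 - c 1 - t) • X (1,0) +
          (c 7) • X (-1,0) + (-3 * c 0 + 2 * c 1 - t) • X (0,1) + (-3 * c 7) • X (0,-1) +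
          (c 4 - c 2) • X (1,1) + (-2 * c 9) • X (-1,-1) + (2 * c 6) • X (2,1) +
          (c 11) • X (-2,-1) + (-3 * c 8) • X (3,1) + (c 13) • X (-3,-1) +
          (-(c 10)) • X (3,2) + (0:ℂ) • X (-3,-2) = 0
        linear_combination (norm := module) heq.symm
      have hg := Fintype.linearIndependent_iff.mp hind _ key
      have k0 : -(c 3) = 0 := hg 0
      have k1 : -(c 5) = 0 := hg 1
      have k2 : 2 * c 0 - c 1 - t = 0 := hg 2
      have k3 : c 7 = 0 := hg 3
      have k4 : -3 * c 0 + 2 * c 1 - t = 0 := hg 4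
      have k6 : c 4 - c 2 = 0 := hg 6
      have k7 : -2 * c 9 = 0 := hg 7
      have k8 : 2 * c 6 = 0 := hg 8
      have k9 : c 11 = 0 := hg 9
      have k10 : -3 * c 8 = 0 := hg 10
      have k11 : c 13 = 0 := hg 11
      have k12 : -(c 10) = 0 := hg 12
      have hc1 : c 1 = 5 / 3 * c 0 := by linear_combination (-(1:ℂ)/3) * k2 + ((1:ℂ)/3) * k4
      have hc3 : c 3 = 0 := by linear_combination -k0
      have hc5 : c 5 = 0 := by linear_combination -k1
      have hc4 : c 4 = c 2 := by linear_combination k6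
      have hc9 : c 9 = 0 := by linear_combination (-(1:ℂ)/2) * k7
      have hc6 : c 6 = 0 := by linear_combination ((1:ℂ)/2) * k8
      have hc8 : c 8 = 0 := by linear_combination (-(1:ℂ)/3) * k10
      have hc10 : c 10 = 0 := by linear_combination -k12
      have hyfin : y = (c 0 / 3) • ((3:ℂ) • Hα + (5:ℂ) • Hβ) +
          c 2 • (X (1,0) + X (0,1)) + c 12 • X (3,2) := by
        rw [hy2, hc1, hc3, hc5, hc4, hc9, hc6, hc8, hc10, k3, k9, k11]
        module
      rw [hyfin]
      refine Submodule.add_mem _ (Submodule.add_mem _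
        (Submodule.smul_mem _ _ (Submodule.subset_span ?_))
        (Submodule.smul_mem _ _ (Submodule.subset_span ?_)))
        (Submodule.smul_mem _ _ (Submodule.subset_span ?_)) <;> simp
    · -- backward direction
      intro hy z hz
      obtain ⟨s, rfl⟩ := Submodule.mem_span_singleton.mp hz
      rw [lie_smul]
      refine Submodule.smul_mem _ _ ?_
      refine Submodule.span_induction ?_ ?_ ?_ ?_ hy
      · intro x hx
        simp only [Set.mem_insert_iff, Set.mem_singleton_iff] at hx
        rcases hx with rfl | rfl | rfl
        · have hbr : ⁅(3:ℂ) • Hα + (5:ℂ) • Hβ, X (1,0) + X (0,1)⁆ =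
              X (1,0) + X (0,1) := by
            simp only [add_lie, smul_lie, lie_add, hA1, hA2, hB1, hB2]
            module
          rw [hbr]
          exact Submodule.mem_span_singleton_self _
        · rw [lie_self]
          exact Submodule.zero_mem _
        · have hbr : ⁅X (3,2), X (1,0) + X (0,1)⁆ = 0 := by
            rw [lie_add, b12a, b12b, add_zero]
          rw [hbr]
          exact Submodule.zero_mem _
      · rw [zero_lie]; exact Submodule.zero_mem _
      · intro a b _ _ ha hb
        rw [add_lie]; exact Submodule.add_mem _ ha hb
      · intro a x _ hx
        rw [smul_lie]; exact Submodule.smul_mem _ _ hx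
  · -- finrank computation
    have hli : LinearIndependent ℂ
        ![(3:ℂ) • Hα + (5:ℂ) • Hβ, X (1,0) + X (0,1), X (3,2)] := by
      rw [Fintype.linearIndependent_iff]
      intro f hf
      have hf' : f 0 • ((3:ℂ) • Hα + (5:ℂ) • Hβ) + f 1 • (X (1,0) + X (0,1)) +
          f 2 • X (3,2) = 0 := by
        rw [← hf, Fin.sum_univ_three]
        rfl
      have key2 : ∑ i, (![3 * f 0, 5 * f 0, f 1, 0, f 1, 0, 0, 0, 0, 0, 0, 0, f 2, 0] :
          Fin 14 → ℂ) i • chev Hα Hβ X i = 0 := by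
        rw [sum14_aux]
        show (3 * f 0) • Hα + (5 * f 0) • Hβ + (f 1) • X (1,0) + (0:ℂ) • X (-1,0) +
          (f 1) • X (0,1) + (0:ℂ) • X (0,-1) + (0:ℂ) • X (1,1) + (0:ℂ) • X (-1,-1) +
          (0:ℂ) • X (2,1) + (0:ℂ) • X (-2,-1) + (0:ℂ) • X (3,1) + (0:ℂ) • X (-3,-1) +
          (f 2) • X (3,2) + (0:ℂ) • X (-3,-2) = 0
        linear_combination (norm := module) hf'
      have hg2 := Fintype.linearIndependent_iff.mp hind _ key2
      have e0 : 3 * f 0 = 0 := hg2 0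
      have e2 : f 1 = 0 := hg2 2
      have e12 : f 2 = 0 := hg2 12
      intro i
      fin_cases i
      · show f 0 = 0; linear_combination ((1:ℂ)/3) * e0
      · exact e2
      · exact e12
    have hsp : ({(3:ℂ) • Hα + (5:ℂ) • Hβ, X (1,0) + X (0,1), X (3,2)} : Set L) =
        Set.range ![(3:ℂ) • Hα + (5:ℂ) • Hβ, X (1,0) + X (0,1), X (3,2)] := by
      simp only [Matrix.range_cons, Matrix.range_empty, Set.union_empty,
        Set.singleton_union]
    rw [hsp, finrank_span_eq_card hli]
    rfl

end G2Formal
end
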